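/- arXiv:1806.01520 — 7 statements merged into one kernel-verified Lean document; each statement's English description precedes it below -/
import Mathlib

section
/- Let 0 < p ≤ 1, λ₁ ≥ 0, and let Ψ : ℝⁿ → ℝ be continuously differentiable. If w* ∈ ℝⁿ is a local minimizer of the function w ↦ Ψ(w) + λ₁ Σ_{i=1}^n |w_i|^p, then the scaled first-order necessary condition holds at w*: for every i ∈ {1,…,n}, w_i* · (∂Ψ/∂w_i)(w*) + p λ₁ |w_i*|^p = 0; equivalently, W* ∇Ψ(w*) + p λ₁ |w*|^p = 0 where W* = diag(w*) and |w*|^p = (|w₁*|^p, …, |w_n*|^p)ᵀ. -/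
open Filter Topology

/-- If `w*` is a local minimizer of `w ↦ Ψ(w) + λ₁ Σᵢ |wᵢ|^p` with
`0 < p ≤ 1`, `λ₁ ≥ 0` and `Ψ` continuously differentiable, then the scaled
first-order necessary condition `wᵢ* ∂Ψ/∂wᵢ(w*) + p λ₁ |wᵢ*|^p = 0` holds for every `i`. -/
theorem scaled_first_order_necessary_condition {n : ℕ} (p l1 : ℝ)
    (hp : 0 < p) (hp1 : p ≤ 1) (hl1 : 0 ≤ l1)
    (Ψ : (Fin n → ℝ) → ℝ) (hΨ : ContDiff ℝ 1 Ψ)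
    (wstar : Fin n → ℝ)
    (hmin : IsLocalMin (fun w => Ψ w + l1 * ∑ i, |w i| ^ p) wstar) :
    ∀ i, wstar i * fderiv ℝ Ψ wstar (Pi.single i 1) + p * l1 * |wstar i| ^ p = 0 := by
  intro i
  by_cases hc : wstar i = 0
  · simp [hc, Real.zero_rpow hp.ne']
  set e : Fin n → ℝ := Pi.single i 1 with he
  set c : ℝ := wstar i with hcdef
  -- the line through wstar in direction e
  have hline0 : wstar + (0 : ℝ) • e = wstar := by simp
  have hline : HasDerivAt (fun t : ℝ => wstar + t • e) e 0 := by
    simpa using ((hasDerivAt_id (0 : ℝ)).smul_const e).const_add wstar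
  have hΨ' : HasFDerivAt Ψ (fderiv ℝ Ψ wstar) wstar :=
    (hΨ.differentiable one_ne_zero wstar).hasFDerivAt
  have hcomp : HasDerivAt (fun t : ℝ => Ψ (wstar + t • e)) (fderiv ℝ Ψ wstar e) 0 := by
    have h := HasFDerivAt.comp_hasDerivAt (x := (0 : ℝ))
      (f := fun t : ℝ => wstar + t • e) (hline0 ▸ hΨ') hline
    simpa [Function.comp_def] using h
  -- rewrite the penalty sum
  have hsum : ∀ t : ℝ, (∑ j, |(wstar + t • e) j| ^ p)
      = |c + t| ^ p + ∑ j ∈ Finset.univ.erase i, |wstar j| ^ p := by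
    intro t
    rw [← Finset.add_sum_erase _ _ (Finset.mem_univ i)]
    congr 1
    · simp [he, hcdef]
    · refine Finset.sum_congr rfl fun j hj => ?_
      have hji : j ≠ i := Finset.ne_of_mem_erase hj
      simp [he, Pi.single_eq_of_ne hji]
  set C : ℝ := ∑ j ∈ Finset.univ.erase i, |wstar j| ^ p with hC
  set g : ℝ → ℝ := fun t => Ψ (wstar + t • e) + l1 * (|c + t| ^ p + C) with hg
  -- g has a local min at 0
  have hgmin : IsLocalMin g 0 := by
    have htend : Filter.Tendsto (fun t : ℝ => wstar + t • e) (𝓝 0)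
        (𝓝 ((fun t : ℝ => wstar + t • e) 0)) := hline.continuousAt
    have hmin' : IsLocalMin (fun w => Ψ w + l1 * ∑ i, |w i| ^ p)
        ((fun t : ℝ => wstar + t • e) 0) := by
      simpa [hline0] using hmin
    have h := IsMinFilter.comp_tendsto (g := fun t : ℝ => wstar + t • e) (b := (0:ℝ)) hmin' htend
    have h' : IsLocalMin (fun t : ℝ => Ψ (wstar + t • e) + l1 * ∑ j, |(wstar + t • e) j| ^ p) 0 := h
    have heq : (fun t : ℝ => Ψ (wstar + t • e) + l1 * ∑ j, |(wstar + t • e) j| ^ p) = g := by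
      funext t
      rw [hg, hsum t]
    exact heq ▸ h'
  -- derivative of the absolute-value term
  have habs : HasDerivAt (fun t : ℝ => |c + t| ^ p)
      (p * |c| ^ (p - 1) * (if 0 < c then 1 else -1)) 0 := by
    rcases lt_or_gt_of_ne hc with hneg | hpos
    · -- c < 0 : near 0, |c + t| = -(c + t)
      have h1 : HasDerivAt (fun t : ℝ => (-(c + t)) ^ p) (p * (-c) ^ (p - 1) * (-1)) 0 := by
        have hin : HasDerivAt (fun t : ℝ => -(c + t)) (-1) 0 := by
          simpa [Pi.neg_def] using ((hasDerivAt_id (0 : ℝ)).const_add c).neg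
        have hout : HasDerivAt (fun x : ℝ => x ^ p) (p * (-c) ^ (p - 1)) (-c) := by
          have : (-c : ℝ) ≠ 0 := by simpa using hc
          simpa using Real.hasDerivAt_rpow_const (Or.inl this)
        have hout' : HasDerivAt (fun x : ℝ => x ^ p) (p * (-c) ^ (p - 1)) (-(c + 0)) := by
          simpa using hout
        simpa [Function.comp_def] using hout'.comp 0 hin
      have hev : (fun t : ℝ => (-(c + t)) ^ p) =ᶠ[𝓝 (0 : ℝ)] fun t => |c + t| ^ p := by
        have : ∀ᶠ t : ℝ in 𝓝 0, c + t < 0 := by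
          have : ContinuousAt (fun t : ℝ => c + t) 0 := by fun_prop
          have := this.eventually_lt_const (by simpa using hneg)
          simpa using this
        filter_upwards [this] with t ht
        rw [abs_of_neg ht]
      have := h1.congr_of_eventuallyEq hev.symm
      simpa [abs_of_neg hneg, if_neg (not_lt.2 hneg.le)] using this
    · -- c > 0 : near 0, |c + t| = c + t
      have h1 : HasDerivAt (fun t : ℝ => (c + t) ^ p) (p * c ^ (p - 1) * 1) 0 := by
        have hin : HasDerivAt (fun t : ℝ => c + t) 1 0 := by
          simpa using (hasDerivAt_id (0 : ℝ)).const_add c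
        have hout : HasDerivAt (fun x : ℝ => x ^ p) (p * c ^ (p - 1)) c := by
          simpa using Real.hasDerivAt_rpow_const (Or.inl hc)
        have hout' : HasDerivAt (fun x : ℝ => x ^ p) (p * c ^ (p - 1)) (c + 0) := by
          simpa using hout
        simpa [Function.comp_def] using hout'.comp 0 hin
      have hev : (fun t : ℝ => (c + t) ^ p) =ᶠ[𝓝 (0 : ℝ)] fun t => |c + t| ^ p := by
        have : ∀ᶠ t : ℝ in 𝓝 0, 0 < c + t := by
          have : ContinuousAt (fun t : ℝ => c + t) 0 := by fun_prop
          have := this.eventually_const_lt (by simpa using hpos)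
          simpa using this
        filter_upwards [this] with t ht
        rw [abs_of_pos ht]
      have := h1.congr_of_eventuallyEq hev.symm
      simpa [abs_of_pos hpos, if_pos hpos] using this
  -- total derivative of g at 0
  have hgderiv : HasDerivAt g
      (fderiv ℝ Ψ wstar e + l1 * (p * |c| ^ (p - 1) * (if 0 < c then 1 else -1))) 0 := by
    have := hcomp.add (((habs.add_const C).const_mul l1))
    simpa [hg, mul_add, Pi.add_def] using this
  have hzero : fderiv ℝ Ψ wstar e
      + l1 * (p * |c| ^ (p - 1) * (if 0 < c then 1 else -1)) = 0 := by
    have := hgmin.deriv_eq_zero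
    rwa [hgderiv.deriv] at this
  -- conclude
  have hkey : c * (if 0 < c then (1:ℝ) else -1) * |c| ^ (p - 1) = |c| ^ p := by
    have habs0 : |c| ≠ 0 := abs_ne_zero.2 hc
    have h1 : c * (if 0 < c then (1:ℝ) else -1) = |c| := by
      rcases lt_or_gt_of_ne hc with h | h
      · simp [if_neg (not_lt.2 h.le), abs_of_neg h]
      · simp [if_pos h, abs_of_pos h]
    have h2 : |c| ^ p = |c| ^ (p - 1) * |c| := by
      have := Real.rpow_add_one habs0 (p - 1)
      rwa [show p - 1 + 1 = p by ring] at this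
    rw [h1, mul_comm]
    exact h2.symm
  have hfd : fderiv ℝ Ψ wstar e
      = -(l1 * (p * |c| ^ (p - 1) * (if 0 < c then 1 else -1))) := by linarith
  rw [hfd]
  have : c * -(l1 * (p * |c| ^ (p - 1) * (if 0 < c then 1 else -1)))
      = -(p * l1 * (c * (if 0 < c then (1:ℝ) else -1) * |c| ^ (p - 1))) := by ring
  rw [this, hkey]
  ring
end

section
/- Let 0 < p ≤ 1, let Ψ : ℝⁿ → ℝ be continuously differentiable, and let λ₁ ≥ 0. If 0 ∈ ∂(Ψ + λ₁ R₁)(w) at a point w ∈ ℝⁿ, where R₁(w) = Σ_{i=1}^n |w_i|^p and ∂ denotes the general subgradient, then W ∇Ψ(w) + p λ₁ |w|^p = 0, where W = diag(w) and |w|^p = (|w₁|^p, …, |w_n|^p)ᵀ. -/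
open Filter Topology

private lemma aux_eq_zero (a : ℝ) (h : ∀ ε > (0:ℝ), ∀ᶠ t in 𝓝 (0:ℝ), a * t ≤ ε * |t|) :
    a = 0 := by
  have habs : ∀ ε > (0:ℝ), |a| ≤ ε := by
    intro ε hε
    obtain ⟨δ, hδ, H⟩ := Metric.eventually_nhds_iff.mp (h ε hε)
    have hd : dist (δ/2) (0:ℝ) < δ := by
      rw [dist_zero_right, Real.norm_eq_abs, abs_of_pos (half_pos hδ)]; linarith
    have hd' : dist (-(δ/2)) (0:ℝ) < δ := by
      rw [dist_zero_right, Real.norm_eq_abs, abs_neg, abs_of_pos (half_pos hδ)]; linarith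
    have h1 := H hd
    have h2 := H hd'
    rw [abs_of_pos (half_pos hδ)] at h1
    rw [abs_neg, abs_of_pos (half_pos hδ)] at h2
    rw [abs_le]
    constructor <;> nlinarith [half_pos hδ]
  by_contra h0
  have hpos : 0 < |a| := abs_pos.mpr h0
  have := habs (|a|/2) (by linarith)
  linarith

private lemma abs_rpow_hasDeriv (p : ℝ) {s : ℝ} (hs : s ≠ 0) :
    ∃ D : ℝ, HasDerivAt (fun t : ℝ => |t| ^ p) D s ∧ s * D = p * |s| ^ p := by
  rcases hs.lt_or_gt with h | h
  · have hneg : (0:ℝ) < -s := by linarith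
    have h1 : HasDerivAt (fun t : ℝ => (-t) ^ p) (p * (-s) ^ (p-1) * (-1)) s := by
      have hbase : HasDerivAt (fun u : ℝ => u ^ p) (p * (-s) ^ (p-1)) (-s) :=
        Real.hasDerivAt_rpow_const (Or.inl (by linarith))
      simpa [Function.comp_def] using hbase.comp s (hasDerivAt_neg s)
    refine ⟨_, h1.congr_of_eventuallyEq ?_, ?_⟩
    · filter_upwards [Iio_mem_nhds h] with t ht
      rw [abs_of_neg ht]
    · rw [abs_of_neg h]
      have h2 : (-s) ^ (p-1) * (-s) = (-s) ^ p := by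
        rw [← Real.rpow_add_one hneg.ne']; norm_num
      rw [← h2]; ring
  · have h1 : HasDerivAt (fun t : ℝ => t ^ p) (p * s ^ (p-1)) s :=
      Real.hasDerivAt_rpow_const (Or.inl (by linarith))
    refine ⟨_, h1.congr_of_eventuallyEq ?_, ?_⟩
    · filter_upwards [Ioi_mem_nhds h] with t ht
      rw [abs_of_pos ht]
    · rw [abs_of_pos h]
      have h2 : s ^ (p-1) * s = s ^ p := by
        rw [← Real.rpow_add_one h.ne']; norm_num
      rw [← h2]; ring

/-- `v` is a regular subgradient of `h` at `x`:
`h(y) ≥ h(x) + vᵀ(y - x) + o(‖y - x‖)` as `y → x`. -/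
def RegSubgrad {n : ℕ} (h : (Fin n → ℝ) → ℝ) (x v : Fin n → ℝ) : Prop :=
  ∀ ε > (0 : ℝ), ∀ᶠ y in nhds x,
    h x + (∑ i, v i * (y i - x i)) - ε * ‖y - x‖ ≤ h y

/-- `v` is a (general) subgradient of `h` at `x`: there are sequences `xs → x`
and `vs → v` with `vs k` a regular subgradient of `h` at `xs k` for every `k`. -/
def GenSubgrad {n : ℕ} (h : (Fin n → ℝ) → ℝ) (x v : Fin n → ℝ) : Prop :=
  ∃ xs vs : ℕ → (Fin n → ℝ),
    Tendsto xs atTop (nhds x) ∧ Tendsto vs atTop (nhds v) ∧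
    ∀ k, RegSubgrad h (xs k) (vs k)

private lemma key_lemma {n : ℕ} (p l1 : ℝ) (hp : 0 < p)
    (Ψ : (Fin n → ℝ) → ℝ) (hΨ : ContDiff ℝ 1 Ψ) (x v : Fin n → ℝ)
    (hrs : RegSubgrad (fun y => Ψ y + l1 * ∑ j, |y j| ^ p) x v) (i : Fin n) :
    x i * fderiv ℝ Ψ x (Pi.single i 1) + p * l1 * |x i| ^ p = x i * v i := by
  by_cases hxi : x i = 0
  · simp [hxi, Real.zero_rpow hp.ne']
  · set e : Fin n → ℝ := Pi.single i 1 with he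
    -- the line through x in direction e
    have hline : HasDerivAt (fun t : ℝ => x + t • e) e 0 := by
      simpa using ((hasDerivAt_id (0:ℝ)).smul_const e).const_add x
    have hL0 : x + (0:ℝ) • e = x := by simp
    -- derivative of Ψ along the line
    have hΨline : HasDerivAt (fun t : ℝ => Ψ (x + t • e)) (fderiv ℝ Ψ x e) 0 := by
      have hd : HasFDerivAt Ψ (fderiv ℝ Ψ x) (x + (0:ℝ) • e) := by
        rw [hL0]; exact ((hΨ.differentiable one_ne_zero) x).hasFDerivAt
      exact hd.comp_hasDerivAt 0 hline
    -- derivative of the penalty along the line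
    obtain ⟨D, hD, hDid⟩ := abs_rpow_hasDeriv p hxi
    have hsumline : HasDerivAt (fun t : ℝ => ∑ j, |(x + t • e) j| ^ p)
        (∑ j, if j = i then D else 0) 0 := by
      apply HasDerivAt.fun_sum
      intro j _
      by_cases hj : j = i
      · subst hj
        simp only [if_pos rfl]
        have heq : (fun t : ℝ => |(x + t • e) j| ^ p) = fun t => |x j + t| ^ p := by
          funext t; simp [he, Pi.single_apply]
        rw [heq]
        have hf : HasDerivAt (fun t : ℝ => x j + t) 1 0 := by
          simpa using (hasDerivAt_id (0:ℝ)).const_add (x j)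
        have hg : HasDerivAt (fun t : ℝ => |t| ^ p) D ((fun t : ℝ => x j + t) 0) := by
          simpa using hD
        have hc := hg.comp 0 hf
        simpa [Function.comp_def] using hc
      · simp only [if_neg hj]
        have heq : (fun t : ℝ => |(x + t • e) j| ^ p) = fun _ => |x j| ^ p := by
          funext t; simp [he, Pi.single_apply, hj]
        rw [heq]; exact hasDerivAt_const _ _
    have hsumval : (∑ j, if j = i then D else (0:ℝ)) = D := by simp
    rw [hsumval] at hsumline
    -- total derivative along the line
    obtain ⟨d, hd_def⟩ : ∃ d : ℝ, d = fderiv ℝ Ψ x e + l1 * D := ⟨_, rfl⟩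
    have hψ : HasDerivAt (fun t : ℝ => Ψ (x + t • e) + l1 * ∑ j, |(x + t • e) j| ^ p) d 0 := by
      rw [hd_def]; exact hΨline.add (hsumline.const_mul l1)
    -- little-o from HasDerivAt
    have hlo := hasDerivAt_iff_isLittleO.mp hψ
    -- v i = d via aux_eq_zero
    have hvi : v i - d = 0 := by
      apply aux_eq_zero
      intro ε hε
      obtain ⟨ε₁, hε₁, hε₁e⟩ : ∃ ε₁ : ℝ, 0 < ε₁ ∧ ε₁ * ‖e‖ ≤ ε / 2 :=
        ⟨ε / (2 * (‖e‖ + 1)), by positivity, by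
          rw [div_mul_eq_mul_div, div_le_iff₀ (by positivity)]
          nlinarith [norm_nonneg e]⟩
      -- eventual inequality from the regular subgradient, pulled back to the line
      have htend : Tendsto (fun t : ℝ => x + t • e) (𝓝 0) (𝓝 x) := by
        have := hline.continuousAt.tendsto
        rwa [hL0] at this
      have h1 := htend.eventually (hrs ε₁ hε₁)
      have h2 := hlo.def (by linarith : (0:ℝ) < ε/2)
      filter_upwards [h1, h2] with t h1t h2t
      -- compute the inner sum and norm
      have hsum : (∑ j, v j * ((x + t • e) j - x j)) = v i * t := by
        simp [he, Pi.single_apply, mul_ite]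
      have hnorm : ‖(x + t • e) - x‖ = |t| * ‖e‖ := by
        simp [norm_smul]
      rw [hsum, hnorm] at h1t
      simp only [sub_zero, smul_eq_mul, Real.norm_eq_abs] at h2t
      have hψ0 : Ψ (x + (0:ℝ) • e) + l1 * ∑ j, |(x + (0:ℝ) • e) j| ^ p
          = Ψ x + l1 * ∑ j, |x j| ^ p := by rw [hL0]
      rw [hψ0] at h2t
      have habs := abs_le.mp h2t
      have hb : ε₁ * (|t| * ‖e‖) ≤ ε/2 * |t| := by
        nlinarith [abs_nonneg t, norm_nonneg e, hε₁e]
      have h4 : v i * t - t * d ≤ ε / 2 * |t| + ε₁ * (|t| * ‖e‖) := by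
        linarith [habs.2, h1t]
      have hre : (v i - d) * t = v i * t - t * d := by ring
      rw [hre]
      linarith [h4, hb]
    have hvieq : v i = d := by linarith
    rw [hvieq, hd_def]
    have : x i * (l1 * D) = l1 * (p * |x i| ^ p) := by
      rw [← mul_assoc, mul_comm (x i) l1, mul_assoc, hDid]
    nlinarith [this]

/-- If `0 ∈ ∂(Ψ + λ₁ R₁)(w)` with `R₁(w) = Σᵢ |wᵢ|^p`, `0 < p ≤ 1`,
`λ₁ ≥ 0`, then the scaled first-order condition `wᵢ ∂Ψ/∂wᵢ(w) + p λ₁ |wᵢ|^p = 0`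
holds for every `i`. -/
theorem subgradient_implies_scaled_condition {n : ℕ} (p l1 : ℝ)
    (hp : 0 < p) (hp1 : p ≤ 1) (hl1 : 0 ≤ l1)
    (Ψ : (Fin n → ℝ) → ℝ) (hΨ : ContDiff ℝ 1 Ψ)
    (w : Fin n → ℝ)
    (hsub : GenSubgrad (fun x => Ψ x + l1 * ∑ i, |x i| ^ p) w 0) :
    ∀ i, w i * fderiv ℝ Ψ w (Pi.single i 1) + p * l1 * |w i| ^ p = 0 := by
  intro i
  obtain ⟨xs, vs, hxs, hvs, hreg⟩ := hsub
  have hkey : ∀ k, xs k i * fderiv ℝ Ψ (xs k) (Pi.single i 1) + p * l1 * |xs k i| ^ p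
      = xs k i * vs k i := fun k => key_lemma p l1 hp Ψ hΨ (xs k) (vs k) (hreg k) i
  have hxsi : Tendsto (fun k => xs k i) atTop (𝓝 (w i)) :=
    ((continuous_apply i).tendsto w).comp hxs
  have hvsi : Tendsto (fun k => vs k i) atTop (𝓝 0) := by
    have := ((continuous_apply i).tendsto (0 : Fin n → ℝ)).comp hvs
    simpa [Function.comp_def] using this
  have hcf : Continuous fun y : Fin n → ℝ => fderiv ℝ Ψ y (Pi.single i 1) :=
    (hΨ.continuous_fderiv one_ne_zero).clm_apply continuous_const
  have hcr : Continuous fun s : ℝ => |s| ^ p := by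
    rw [continuous_iff_continuousAt]
    intro s
    exact (Real.continuousAt_rpow_const |s| p (Or.inr hp.le)).comp continuous_abs.continuousAt
  have hL : Tendsto (fun k => xs k i * fderiv ℝ Ψ (xs k) (Pi.single i 1)
        + p * l1 * |xs k i| ^ p) atTop
      (𝓝 (w i * fderiv ℝ Ψ w (Pi.single i 1) + p * l1 * |w i| ^ p)) := by
    refine Tendsto.add (hxsi.mul ((hcf.tendsto w).comp hxs)) ?_
    exact tendsto_const_nhds.mul ((hcr.tendsto (w i)).comp hxsi)
  have hR : Tendsto (fun k => xs k i * vs k i) atTop (𝓝 0) := by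
    have := hxsi.mul hvsi
    simpa using this
  exact tendsto_nhds_unique (hL.congr (fun k => hkey k)) hR
end

section
/- Let 0 < p ≤ 1. Suppose (w*, λ*) ∈ ℝⁿ × ℝ^r together with multipliers ζ̂* ∈ ℝⁿ and β* ∈ ℝ^r satisfies the KKT conditions of the reduced one-level problem: (a) ∂f(w*)/∂w_i + Σ_{j∉I(w*)} (∂²G(w*, λ̄*)/∂w_i ∂w_j) ζ̂_j* + p(p−1) λ₁* |w_i*|^{p−2} ζ̂_i* = 0 for all i ∉ I(w*); (b) ∂f(w*)/∂w_i + Σ_{j∉I(w*)} (∂²G(w*, λ̄*)/∂w_i ∂w_j) ζ̂_j* + ζ̂_i* = 0 for all i ∈ I(w*); (c) Σ_{i∉I(w*)} p·sgn(w_i*) |w_i*|^{p−1} ζ̂_i* = β₁*; (d) Σ_{j∉I(w*)} (∂R_i(w*)/∂w_j) ζ̂_j* = β_i* for i = 2, …, r; (e) ∂G(w*, λ̄*)/∂w_i + p·sgn(w_i*) λ₁* |w_i*|^{p−1} = 0 for all i ∉ I(w*); (f) λ* ≥ 0, β* ≥ 0, (λ*)ᵀβ* = 0. Define ζ* ∈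 ℝⁿ by ζ_i* = 0 for i ∈ I(w*) and ζ_i* = ζ̂_i* for i ∉ I(w*). Then (w*, λ*) together with (ζ*, β*) satisfies the SB-KKT conditions. -/
open Filter Topology Finset

/-- Partial derivative `∂h/∂wᵢ (w)`. -/
noncomputable def pd {n : ℕ} (h : (Fin n → ℝ) → ℝ) (w : Fin n → ℝ) (i : Fin n) : ℝ :=
  fderiv ℝ h w (Pi.single i 1)

/-- Second partial derivative `∂²h/∂wᵢ∂wⱼ (w)`. -/
noncomputable def pd2 {n : ℕ} (h : (Fin n → ℝ) → ℝ) (w : Fin n → ℝ) (i j : Fin n) : ℝ :=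
  pd (fun x => pd h x j) w i

/-- if `(w*, λ*)` together with multipliers `(ζ̂*, β*)` satisfies the KKT
conditions (a)–(f) of the reduced one-level problem, then `(w*, λ*)` together with
`(ζ*, β*)`, where `ζᵢ* = 0` for `i ∈ I(w*)` and `ζᵢ* = ζ̂ᵢ*` otherwise, satisfies the
SB-KKT conditions (i)–(vi). -/
theorem kkt_reduced_implies_sbkkt {n r : ℕ} [NeZero r] (p : ℝ)
    (hp : 0 < p) (hp1 : p ≤ 1)
    (f g : (Fin n → ℝ) → ℝ) (R : Fin r → (Fin n → ℝ) → ℝ)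
    (hfC : ContDiff ℝ 1 f) (hgC : ContDiff ℝ 2 g) (hRC : ∀ i, ContDiff ℝ 2 (R i))
    (G : (Fin n → ℝ) → (Fin r → ℝ) → ℝ)
    (hG : ∀ w lam, G w lam = g w + ∑ i ∈ univ.filter (fun i : Fin r => i ≠ 0), lam i * R i w)
    (wstar : Fin n → ℝ) (lamstar : Fin r → ℝ)
    (zetahat : Fin n → ℝ) (betastar : Fin r → ℝ)
    -- (a)
    (ha : ∀ i, wstar i ≠ 0 →
      pd f wstar i
        + (∑ j ∈ univ.filter (fun j => wstar j ≠ 0),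
            pd2 (fun x => G x lamstar) wstar i j * zetahat j)
        + p * (p - 1) * lamstar 0 * |wstar i| ^ (p - 2) * zetahat i = 0)
    -- (b)
    (hb : ∀ i, wstar i = 0 →
      pd f wstar i
        + (∑ j ∈ univ.filter (fun j => wstar j ≠ 0),
            pd2 (fun x => G x lamstar) wstar i j * zetahat j)
        + zetahat i = 0)
    -- (c)
    (hc : (∑ i ∈ univ.filter (fun i => wstar i ≠ 0),
        p * Real.sign (wstar i) * |wstar i| ^ (p - 1) * zetahat i) = betastar 0)
    -- (d)
    (hd : ∀ i : Fin r, i ≠ 0 →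
      (∑ j ∈ univ.filter (fun j => wstar j ≠ 0), pd (R i) wstar j * zetahat j) = betastar i)
    -- (e)
    (he : ∀ i, wstar i ≠ 0 →
      pd (fun x => G x lamstar) wstar i
        + p * Real.sign (wstar i) * lamstar 0 * |wstar i| ^ (p - 1) = 0)
    -- (f)
    (hf1 : ∀ i, 0 ≤ lamstar i) (hf2 : ∀ i, 0 ≤ betastar i)
    (hf3 : ∑ i, lamstar i * betastar i = 0) :
    ∃ zetastar : Fin n → ℝ,
      (∀ i, zetastar i = if wstar i = 0 then 0 else zetahat i) ∧
      -- (i)  W*² ∇f(w*) + H(w*, λ*) ζ* = 0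
      (∀ i, (wstar i) ^ 2 * pd f wstar i
          + ((∑ j, (wstar i) ^ 2 * pd2 (fun x => G x lamstar) wstar i j * zetastar j)
            + lamstar 0 * p * (p - 1) * |wstar i| ^ p * zetastar i) = 0) ∧
      -- (ii)  W* ∇_w G(w*, λ̄*) + p λ₁* |w*|^p = 0
      (∀ i, wstar i * pd (fun x => G x lamstar) wstar i
          + p * lamstar 0 * |wstar i| ^ p = 0) ∧
      -- (iii)
      ((p * ∑ i ∈ univ.filter (fun i => wstar i ≠ 0),
          Real.sign (wstar i) * |wstar i| ^ (p - 1) * zetastar i) = betastar 0) ∧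
      -- (iv)
      (∀ i, wstar i = 0 → zetastar i = 0) ∧
      -- (v)
      (∀ i : Fin r, i ≠ 0 → (∑ j, pd (R i) wstar j * zetastar j) = betastar i) ∧
      -- (vi)
      ((∀ i, 0 ≤ lamstar i) ∧ (∀ i, 0 ≤ betastar i) ∧ ∑ i, lamstar i * betastar i = 0) := by
  classical
  set zetastar : Fin n → ℝ := fun i => if wstar i = 0 then 0 else zetahat i with hz
  refine ⟨zetastar, fun i => rfl, ?_, ?_, ?_, ?_, ?_, ⟨hf1, hf2, hf3⟩⟩
  · -- (i)
    intro i
    by_cases hi : wstar i = 0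
    · have hzi : zetastar i = 0 := by simp [hz, hi]
      simp [hi, hzi]
    · have hpow : |wstar i| ^ p = (wstar i) ^ 2 * |wstar i| ^ (p - 2) := by
        have habs : (0:ℝ) < |wstar i| := abs_pos.mpr hi
        have h2 : (wstar i) ^ 2 = |wstar i| ^ ((2:ℕ):ℝ) := by
          rw [Real.rpow_natCast, sq_abs]
        rw [h2, ← Real.rpow_add habs]
        norm_num
      have hsum : (∑ j, (wstar i) ^ 2 * pd2 (fun x => G x lamstar) wstar i j * zetastar j)
          = (wstar i) ^ 2 * ∑ j ∈ univ.filter (fun j => wstar j ≠ 0),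
              pd2 (fun x => G x lamstar) wstar i j * zetahat j := by
        rw [Finset.mul_sum, Finset.sum_filter]
        refine Finset.sum_congr rfl fun j _ => ?_
        by_cases hj : wstar j = 0 <;> simp [hz, hj] <;> ring
      rw [hsum]
      have hzi : zetastar i = zetahat i := by simp [hz, hi]
      rw [hzi, hpow]
      linear_combination (wstar i) ^ 2 * (ha i hi)
  · -- (ii)
    intro i
    by_cases hi : wstar i = 0
    · simp [hi, Real.zero_rpow hp.ne']
    · have habs : (0:ℝ) < |wstar i| := abs_pos.mpr hi
      have hsgn : Real.sign (wstar i) * wstar i = |wstar i| := by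
        rcases lt_or_gt_of_ne hi with h | h
        · rw [Real.sign_of_neg h, abs_of_neg h]; ring
        · rw [Real.sign_of_pos h, abs_of_pos h]; ring
      have hpow : |wstar i| ^ p = |wstar i| * |wstar i| ^ (p - 1) := by
        nth_rewrite 2 [← Real.rpow_one |wstar i|]
        rw [← Real.rpow_add habs]; norm_num
      rw [hpow]
      linear_combination wstar i * (he i hi) - p * lamstar 0 * |wstar i| ^ (p - 1) * hsgn
  · -- (iii)
    rw [← hc, Finset.mul_sum]
    refine Finset.sum_congr rfl fun i hi => ?_
    have : wstar i ≠ 0 := (Finset.mem_filter.mp hi).2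
    simp only [hz, if_neg this]
    ring
  · -- (iv)
    intro i hi; simp [hz, hi]
  · -- (v)
    intro i hi
    rw [← hd i hi, Finset.sum_filter]
    refine Finset.sum_congr rfl fun j _ => ?_
    by_cases hj : wstar j = 0 <;> simp [hz, hj]
end

section
/- Let 0 < p ≤ 1. Let {w^k} ⊆ ℝⁿ, {λ^k} ⊆ ℝ^r, {μ_k} ⊆ (0, ∞), and {ε^k} ⊆ ℝⁿ be sequences such that w^k → w*, λ^k → λ*, μ_k → 0, ε^k → 0, λ₁^k > 0 for all k, λ₁* > 0, and for all k the approximate stationarity condition ∇_w G(w^k, λ̄^k) + λ₁^k ∇φ_{μ_k}(w^k) = ε^k holds. If p = 1, assume additionally that λ₁* ≠ |∂G(w*, λ̄*)/∂w_i| for every i ∈ I(w*). Then there exists γ > 0 such that for all sufficiently large k and every i ∈ I(w*), μ_k² ≥ γ |w_i^k|^{2/(2−p)}. -/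
open Filter Topology Finset

lemma pd_sum {n r : ℕ} (g : (Fin n → ℝ) → ℝ) (R : Fin r → (Fin n → ℝ) → ℝ)
    (hgC : ContDiff ℝ 2 g) (hRC : ∀ i, ContDiff ℝ 2 (R i)) (S : Finset (Fin r))
    (c : Fin r → ℝ) (y : Fin n → ℝ) (i : Fin n) :
    pd (fun x => g x + ∑ j ∈ S, c j * R j x) y i
      = pd g y i + ∑ j ∈ S, c j * pd (R j) y i := by
  have hg' : HasFDerivAt g (fderiv ℝ g y) y :=
    (hgC.differentiable two_ne_zero y).hasFDerivAt
  have hR' : ∀ j, HasFDerivAt (R j) (fderiv ℝ (R j) y) y := fun j =>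
    ((hRC j).differentiable two_ne_zero y).hasFDerivAt
  have hsum : HasFDerivAt (fun x => g x + ∑ j ∈ S, c j * R j x)
      (fderiv ℝ g y + ∑ j ∈ S, c j • fderiv ℝ (R j) y) y := by
    refine hg'.add (HasFDerivAt.fun_sum fun j _ => ?_)
    simpa [smul_eq_mul] using (hR' j).fun_const_smul (c j)
  rw [pd, hsum.fderiv]
  simp [pd, ContinuousLinearMap.sum_apply, smul_eq_mul]

lemma pd_cont {n : ℕ} (g : (Fin n → ℝ) → ℝ) (hgC : ContDiff ℝ 2 g) (i : Fin n) :
    Continuous fun y => pd g y i := by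
  have h1 : Continuous fun y => fderiv ℝ g y := hgC.continuous_fderiv two_ne_zero
  exact h1.clm_apply continuous_const

lemma aux_ub (p lam0 c1 c2 wi mu E : ℝ) (hp : 0 < p) (hmu : 0 < mu) (hlam : 0 < lam0)
    (heq : lam0 * (p * wi * (wi^2 + mu^2) ^ (p/2 - 1)) = E)
    (hc2 : 0 < c2) (hE : |E| ≤ c1) (hl : c2 ≤ lam0) :
    |wi| ≤ c1 / (c2 * p) * (wi^2 + mu^2) ^ (1 - p/2) := by
  have hs : (0:ℝ) < wi^2 + mu^2 := by positivity
  have hsp : (0:ℝ) < (wi^2+mu^2) ^ (p/2-1) := Real.rpow_pos_of_pos hs _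
  have habs : (lam0 * p) * (|wi| * (wi^2+mu^2)^(p/2-1)) = |E| := by
    rw [← heq, abs_mul, abs_mul, abs_mul, abs_of_pos hlam, abs_of_pos hp, abs_of_pos hsp]; ring
  have hA : |wi| * (wi^2+mu^2)^(p/2-1) ≤ c1/(c2*p) := by
    rw [le_div_iff₀ (by positivity)]
    calc |wi| * (wi^2+mu^2)^(p/2-1) * (c2*p)
        ≤ |wi| * (wi^2+mu^2)^(p/2-1) * (lam0*p) :=
          mul_le_mul_of_nonneg_left (mul_le_mul_of_nonneg_right hl hp.le) (by positivity)
      _ = |E| := by rw [← habs]; ring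
      _ ≤ c1 := hE
  calc |wi| = |wi| * (wi^2+mu^2)^(p/2-1) * (wi^2+mu^2)^(1-p/2) := by
        rw [mul_assoc, ← Real.rpow_add hs, show p/2-1+(1-p/2) = (0:ℝ) by ring,
          Real.rpow_zero, mul_one]
    _ ≤ c1/(c2*p) * (wi^2+mu^2)^(1-p/2) :=
        mul_le_mul_of_nonneg_right hA (Real.rpow_nonneg hs.le _)

lemma auxA (p M : ℝ) (hp : 0 < p) (hp1 : p < 1) (hM : 0 < M) :
    ∃ γ > (0:ℝ), ∃ δ > (0:ℝ), ∀ wi mu : ℝ, 0 < mu →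
      |wi| ≤ M * (wi^2 + mu^2) ^ (1 - p/2) → |wi| < δ →
      γ * |wi| ^ (2/(2-p)) ≤ mu^2 := by
  have h2p : (0:ℝ) < 2 - p := by linarith
  set q := 2/(2-p) with hq
  have hq0 : 0 < q := by positivity
  have hq2 : q < 2 := by rw [hq, div_lt_iff₀ h2p]; nlinarith
  have hγ0 : 0 < M ^ (-q) / 2 := by positivity
  refine ⟨M^(-q)/2, hγ0, (M^(-q)/2) ^ (1/(2-q)), Real.rpow_pos_of_pos hγ0 _, ?_⟩
  intro wi mu hmu hle hδ
  have hs : (0:ℝ) < wi^2 + mu^2 := by positivity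
  have hδe : ((M^(-q)/2) ^ (1/(2-q))) ^ (2 - q) = M^(-q)/2 := by
    rw [← Real.rpow_mul hγ0.le, one_div_mul_cancel (by linarith : 2 - q ≠ 0), Real.rpow_one]
  have hX : |wi| ^ q ≤ M^q * (wi^2+mu^2) := by
    calc |wi|^q ≤ (M * (wi^2+mu^2)^(1-p/2))^q := Real.rpow_le_rpow (abs_nonneg _) hle hq0.le
      _ = M^q * ((wi^2+mu^2)^(1-p/2))^q := Real.mul_rpow hM.le (Real.rpow_nonneg hs.le _)
      _ = M^q * (wi^2+mu^2) := by
          rw [← Real.rpow_mul hs.le, show (1-p/2)*q = 1 by rw [hq]; field_simp,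
            Real.rpow_one]
  have hsge : M^(-q) * |wi|^q ≤ wi^2 + mu^2 := by
    rw [Real.rpow_neg hM.le, inv_mul_le_iff₀ (Real.rpow_pos_of_pos hM q)]
    exact hX
  have h5 : |wi| ^ (2 - q) ≤ M^(-q)/2 := by
    calc |wi|^(2-q) ≤ ((M^(-q)/2)^(1/(2-q)))^(2-q) :=
        Real.rpow_le_rpow (abs_nonneg _) hδ.le (by linarith)
      _ = M^(-q)/2 := hδe
  have hw2 : wi^2 ≤ |wi|^q * (M^(-q)/2) := by
    calc wi^2 = |wi| ^ ((2:ℝ)) := by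
          rw [show (2:ℝ) = ((2:ℕ):ℝ) by norm_num, Real.rpow_natCast, sq_abs]
      _ = |wi| ^ (q + (2 - q)) := by rw [show q + (2-q) = (2:ℝ) by ring]
      _ = |wi|^q * |wi|^(2-q) :=
          Real.rpow_add' (abs_nonneg _) (by rw [show q+(2-q) = (2:ℝ) by ring]; norm_num)
      _ ≤ |wi|^q * (M^(-q)/2) :=
          mul_le_mul_of_nonneg_left h5 (Real.rpow_nonneg (abs_nonneg _) _)
  linarith

lemma auxB (t wi mu : ℝ) (ht0 : 0 < t) (ht1 : t < 1) (hmu : 0 < mu)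
    (h : |wi| ≤ t * (wi^2 + mu^2) ^ (1 - 1/2 : ℝ)) :
    (1 - t^2)/t^2 * wi^2 ≤ mu^2 := by
  have hs : (0:ℝ) < wi^2 + mu^2 := by positivity
  have hXnn : (0:ℝ) ≤ (wi^2+mu^2) ^ (1 - 1/2 : ℝ) := Real.rpow_nonneg hs.le _
  have hX : ((wi^2+mu^2) ^ (1 - 1/2 : ℝ)) ^ 2 = wi^2 + mu^2 := by
    rw [sq, ← Real.rpow_add hs]; norm_num
  have h3 := mul_le_mul h h (abs_nonneg wi) (by positivity)
  have h2 : wi^2 ≤ t^2 * (wi^2 + mu^2) := by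
    calc wi^2 = |wi| * |wi| := by rw [abs_mul_abs_self]; ring
      _ ≤ (t * (wi^2+mu^2)^(1-1/2:ℝ)) * (t * (wi^2+mu^2)^(1-1/2:ℝ)) := h3
      _ = t^2 * ((wi^2+mu^2)^(1-1/2:ℝ))^2 := by ring
      _ = t^2 * (wi^2+mu^2) := by rw [hX]
  rw [div_mul_eq_mul_div, div_le_iff₀ (by positivity)]
  nlinarith

lemma auxC' (lam0 wi mu E : ℝ) (hmu : 0 < mu) (hlam : 0 < lam0)
    (heq : lam0 * (1 * wi * (wi^2 + mu^2) ^ (1/2 - 1 : ℝ)) = E) : |E| ≤ lam0 := by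
  have hs : (0:ℝ) < wi^2 + mu^2 := by positivity
  have hsp : (0:ℝ) < (wi^2+mu^2) ^ (1/2 - 1:ℝ) := Real.rpow_pos_of_pos hs _
  have habs : |E| = lam0 * (|wi| * (wi^2+mu^2) ^ (1/2 - 1:ℝ)) := by
    rw [← heq, abs_mul, abs_mul, abs_mul, abs_one, abs_of_pos hlam, abs_of_pos hsp]; ring
  rw [habs]
  have hX : ((wi^2+mu^2) ^ (1/2:ℝ))^2 = wi^2+mu^2 := by rw [sq, ← Real.rpow_add hs]; norm_num
  have hle : |wi| ≤ (wi^2+mu^2) ^ (1/2 : ℝ) := by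
    nlinarith [Real.rpow_nonneg hs.le (1/2:ℝ), abs_nonneg wi, sq_abs wi]
  have h1 : |wi| * (wi^2+mu^2)^(1/2-1:ℝ) ≤ 1 := by
    calc |wi| * (wi^2+mu^2)^(1/2-1:ℝ)
        ≤ (wi^2+mu^2)^(1/2:ℝ) * (wi^2+mu^2)^(1/2-1:ℝ) :=
          mul_le_mul_of_nonneg_right hle (Real.rpow_nonneg hs.le _)
      _ = 1 := by rw [← Real.rpow_add hs]; norm_num
  calc lam0 * (|wi| * (wi^2+mu^2)^(1/2-1:ℝ)) ≤ lam0 * 1 :=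
      mul_le_mul_of_nonneg_left h1 hlam.le
    _ = lam0 := mul_one _

/-- Proposition 1: under Assumptions A1 and A3, the smoothing parameter
`μₖ` goes to `0` not faster than `max_{i ∈ I(w*)} |wᵢᵏ|^{1/(2−p)}`: there is `γ > 0`
with `μₖ² ≥ γ |wᵢᵏ|^{2/(2−p)}` for all large `k` and all `i ∈ I(w*)`. -/
theorem smoothing_parameter_lower_bound {n r : ℕ} [NeZero r] (p : ℝ)
    (hp : 0 < p) (hp1 : p ≤ 1)
    (g : (Fin n → ℝ) → ℝ) (R : Fin r → (Fin n → ℝ) → ℝ)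
    (hgC : ContDiff ℝ 2 g) (hRC : ∀ i, ContDiff ℝ 2 (R i))
    (G : (Fin n → ℝ) → (Fin r → ℝ) → ℝ)
    (hG : ∀ w lam, G w lam = g w + ∑ i ∈ univ.filter (fun i : Fin r => i ≠ 0), lam i * R i w)
    (wstar : Fin n → ℝ) (lamstar : Fin r → ℝ)
    (w : ℕ → Fin n → ℝ) (lam : ℕ → Fin r → ℝ) (μ : ℕ → ℝ) (eps : ℕ → Fin n → ℝ)
    (hμpos : ∀ k, 0 < μ k)
    (hw : Tendsto w atTop (nhds wstar))
    (hlam : Tendsto lam atTop (nhds lamstar))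
    (hμ : Tendsto μ atTop (nhds 0))
    (heps : Tendsto eps atTop (nhds 0))
    (hlampos : ∀ k, 0 < lam k 0) (hlamstar : 0 < lamstar 0)
    -- approximate stationarity: ∇_w G(wᵏ, λ̄ᵏ) + λ₁ᵏ ∇φ_{μₖ}(wᵏ) = εᵏ
    (hstat : ∀ k i, pd (fun x => G x (lam k)) (w k) i
        + lam k 0 * (p * w k i * ((w k i) ^ 2 + (μ k) ^ 2) ^ (p / 2 - 1)) = eps k i)
    -- A3 (only needed for p = 1)
    (hA3 : p = 1 → ∀ i, wstar i = 0 →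
      lamstar 0 ≠ |pd (fun x => G x lamstar) wstar i|) :
    ∃ γ > (0 : ℝ), ∀ᶠ k in atTop, ∀ i, wstar i = 0 →
      γ * |w k i| ^ (2 / (2 - p)) ≤ (μ k) ^ 2 := by

  have hfun : ∀ c : Fin r → ℝ, (fun x => G x c)
      = fun x => g x + ∑ j ∈ univ.filter (fun j : Fin r => j ≠ 0), c j * R j x :=
    fun c => funext fun x => hG x c
  have hlamj : ∀ j, Tendsto (fun k => lam k j) atTop (𝓝 (lamstar j)) :=
    fun j => tendsto_pi_nhds.1 hlam j
  have hDD : ∀ i : Fin n, Tendsto (fun k => pd (fun x => G x (lam k)) (w k) i) atTop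
      (𝓝 (pd (fun x => G x lamstar) wstar i)) := by
    intro i
    have hcalc : ∀ (c : Fin r → ℝ) (y), pd (fun x => G x c) y i
        = pd g y i + ∑ j ∈ univ.filter (fun j : Fin r => j ≠ 0), c j * pd (R j) y i :=
      fun c y => by rw [hfun c]; exact pd_sum g R hgC hRC _ c y i
    simp only [hcalc]
    exact (((pd_cont g hgC i).tendsto wstar).comp hw).add
      (tendsto_finset_sum _ fun j _ =>
        (hlamj j).mul (((pd_cont (R j) (hRC j) i).tendsto wstar).comp hw))
  have key : ∀ i : Fin n, ∃ γ > (0:ℝ), ∀ᶠ k in atTop,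
      wstar i = 0 → γ * |w k i| ^ (2/(2-p)) ≤ μ k ^ 2 := by
    intro i
    by_cases hi : wstar i = 0
    swap
    · exact ⟨1, one_pos, Eventually.of_forall fun k h => absurd h hi⟩
    have hwi : Tendsto (fun k => w k i) atTop (𝓝 0) := by
      simpa [hi] using tendsto_pi_nhds.1 hw i
    have hepsi : Tendsto (fun k => eps k i) atTop (𝓝 0) := by
      simpa using tendsto_pi_nhds.1 heps i
    have hE : Tendsto (fun k => |eps k i - pd (fun x => G x (lam k)) (w k) i|) atTop
        (𝓝 |pd (fun x => G x lamstar) wstar i|) := by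
      have h := (hepsi.sub (hDD i)).abs
      simpa using h
    have heq : ∀ k, lam k 0 * (p * w k i * (w k i ^ 2 + μ k ^ 2) ^ (p/2 - 1))
        = eps k i - pd (fun x => G x (lam k)) (w k) i := fun k => by
      have h := hstat k i; linarith
    rcases lt_or_eq_of_le hp1 with hplt | hp1'
    · -- p < 1
      obtain ⟨γ, hγ0, δ, hδ0, hpt⟩ := auxA p
        ((|pd (fun x => G x lamstar) wstar i| + 1) / (lamstar 0 / 2 * p)) hp hplt (by positivity)
      refine ⟨γ, hγ0, ?_⟩
      have h1 := hE.eventually_lt_const (lt_add_one |pd (fun x => G x lamstar) wstar i|)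
      have h2 := (hlamj 0).eventually_const_lt (by linarith : lamstar 0 / 2 < lamstar 0)
      have h3 : ∀ᶠ k in atTop, |w k i| < δ := by
        have h4 := hwi.abs
        simp only [abs_zero] at h4
        exact h4.eventually_lt_const hδ0
      filter_upwards [h1, h2, h3] with k hk1 hk2 hk3 _
      exact hpt (w k i) (μ k) (hμpos k)
        (aux_ub p (lam k 0) _ _ _ _ _ hp (hμpos k) (hlampos k) (heq k)
          (by positivity) hk1.le hk2.le) hk3
    · -- p = 1
      subst hp1'
      have ha := hA3 rfl i hi
      have ha0 : 0 ≤ |pd (fun x => G x lamstar) wstar i| := abs_nonneg _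
      rcases ha.lt_or_gt with hlt | hgt
      · -- lamstar 0 < a : contradiction branch
        refine ⟨1, one_pos, ?_⟩
        have h1 := hE.eventually_const_lt
          (show (lamstar 0 + |pd (fun x => G x lamstar) wstar i|)/2
            < |pd (fun x => G x lamstar) wstar i| by linarith)
        have h2 := (hlamj 0).eventually_lt_const
          (show lamstar 0 < (lamstar 0 + |pd (fun x => G x lamstar) wstar i|)/2 by linarith)
        filter_upwards [h1, h2] with k hk1 hk2 _
        exfalso
        have h3 := auxC' (lam k 0) (w k i) (μ k) _ (hμpos k) (hlampos k) (heq k)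
        linarith
      · -- a < lamstar 0
        obtain ⟨m, m', ham, hm0, hmm', hm'l⟩ :
            ∃ m m', |pd (fun x => G x lamstar) wstar i| < m ∧ 0 < m ∧ m < m' ∧ m' < lamstar 0 :=
          ⟨(|pd (fun x => G x lamstar) wstar i| + lamstar 0)/2,
           ((|pd (fun x => G x lamstar) wstar i| + lamstar 0)/2 + lamstar 0)/2,
           by linarith, by linarith, by linarith, by linarith⟩
        have ht0 : 0 < m/m' := div_pos hm0 (by linarith)
        have ht1 : m/m' < 1 := (div_lt_one (by linarith)).mpr hmm'
        refine ⟨(1 - (m/m')^2)/(m/m')^2, div_pos (by nlinarith) (by positivity), ?_⟩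
        filter_upwards [hE.eventually_lt_const ham, (hlamj 0).eventually_const_lt hm'l]
          with k hk1 hk2 _
        have hub := aux_ub 1 (lam k 0) m m' (w k i) (μ k) _ one_pos (hμpos k) (hlampos k)
          (heq k) (by linarith) hk1.le hk2.le
        have hB := auxB (m/m') (w k i) (μ k) ht0 ht1 (hμpos k) (by simpa using hub)
        rw [show (2/(2-(1:ℝ))) = ((2:ℕ):ℝ) by norm_num, Real.rpow_natCast, sq_abs]
        exact hB
  choose γ hγ0 hγev using key
  rcases isEmpty_or_nonempty (Fin n) with hemp | hne
  · exact ⟨1, one_pos, Eventually.of_forall fun k i _ => (hemp.elim i)⟩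
  · obtain ⟨i₀, hi₀⟩ := Finite.exists_min γ
    refine ⟨γ i₀, hγ0 i₀, ?_⟩
    have hall : ∀ᶠ k in atTop, ∀ i, wstar i = 0 → γ i * |w k i| ^ (2/(2-p)) ≤ μ k ^ 2 :=
      eventually_all.mpr hγev
    filter_upwards [hall] with k hk i hi
    calc γ i₀ * |w k i| ^ (2/(2-p)) ≤ γ i * |w k i| ^ (2/(2-p)) :=
        mul_le_mul_of_nonneg_right (hi₀ i) (Real.rpow_nonneg (abs_nonneg _) _)
      _ ≤ μ k ^ 2 := hk i hi
end

section
/- Let 0 < p ≤ 1. Let {w^k} ⊆ ℝⁿ, {λ^k} ⊆ ℝ^r, {μ_k} ⊆ (0, ∞), and {ε^k} ⊆ ℝⁿ be sequences such that w^k → w*, λ^k → λ*, μ_k → 0, ε^k → 0, λ₁^k > 0 for all k, λ₁* > 0, and for all k the approximate stationarity condition ∇_w G(w^k, λ̄^k) + λ₁^k ∇φ_{μ_k}(w^k) = ε^k holds. If p = 1, assume additionally that λ₁* ≠ |∂G(w*, λ̄*)/∂w_i| for every i ∈ I(w*). Then for every i ∈ I(w*), lim_{k→∞} |(∇²φ_{μ_k}(w^k))_{ii}|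 = lim_{k→∞} | p ((w_i^k)² + μ_k²)^{p/2 − 1} + p(p−2) (w_i^k)² ((w_i^k)² + μ_k²)^{p/2 − 2} | = ∞. -/
open Filter Topology Finset

/-- Proposition 2: for each `i ∈ I(w*)`, the diagonal Hessian entry of
the smoothed function blows up:
`|(∇²φ_{μₖ}(wᵏ))ᵢᵢ| = |p ((wᵢᵏ)² + μₖ²)^{p/2−1} + p(p−2)(wᵢᵏ)²((wᵢᵏ)² + μₖ²)^{p/2−2}| → ∞`. -/
theorem smoothing_hessian_blowup {n r : ℕ} [NeZero r] (p : ℝ)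
    (hp : 0 < p) (hp1 : p ≤ 1)
    (g : (Fin n → ℝ) → ℝ) (R : Fin r → (Fin n → ℝ) → ℝ)
    (hgC : ContDiff ℝ 2 g) (hRC : ∀ i, ContDiff ℝ 2 (R i))
    (G : (Fin n → ℝ) → (Fin r → ℝ) → ℝ)
    (hG : ∀ w lam, G w lam = g w + ∑ i ∈ univ.filter (fun i : Fin r => i ≠ 0), lam i * R i w)
    (wstar : Fin n → ℝ) (lamstar : Fin r → ℝ)
    (w : ℕ → Fin n → ℝ) (lam : ℕ → Fin r → ℝ) (μ : ℕ → ℝ) (eps : ℕ → Fin n → ℝ)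
    (hμpos : ∀ k, 0 < μ k)
    (hw : Tendsto w atTop (nhds wstar))
    (hlam : Tendsto lam atTop (nhds lamstar))
    (hμ : Tendsto μ atTop (nhds 0))
    (heps : Tendsto eps atTop (nhds 0))
    (hlampos : ∀ k, 0 < lam k 0) (hlamstar : 0 < lamstar 0)
    -- approximate stationarity: ∇_w G(wᵏ, λ̄ᵏ) + λ₁ᵏ ∇φ_{μₖ}(wᵏ) = εᵏ
    (hstat : ∀ k i, pd (fun x => G x (lam k)) (w k) i
        + lam k 0 * (p * w k i * ((w k i) ^ 2 + (μ k) ^ 2) ^ (p / 2 - 1)) = eps k i)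
    -- A3 (only needed for p = 1)
    (hA3 : p = 1 → ∀ i, wstar i = 0 →
      lamstar 0 ≠ |pd (fun x => G x lamstar) wstar i|) :
    ∀ i, wstar i = 0 →
      Tendsto (fun k =>
          |p * ((w k i) ^ 2 + (μ k) ^ 2) ^ (p / 2 - 1)
            + p * (p - 2) * (w k i) ^ 2 * ((w k i) ^ 2 + (μ k) ^ 2) ^ (p / 2 - 2)|)
        atTop atTop := by
  intro i hi
  classical
  set S := univ.filter (fun j : Fin r => j ≠ 0) with hSdef
  -- decomposition of the partial derivative of G
  have hpdG : ∀ (lm : Fin r → ℝ) (x : Fin n → ℝ),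
      pd (fun y => G y lm) x i = pd g x i + ∑ j ∈ S, lm j * pd (R j) x i := by
    intro lm x
    have hdg : DifferentiableAt ℝ g x := (hgC.differentiable two_ne_zero).differentiableAt
    have hdR : ∀ j ∈ S, DifferentiableAt ℝ (fun y => lm j * R j y) x := fun j _ =>
      (((hRC j).differentiable two_ne_zero).differentiableAt).const_mul _
    have hfun : (fun y => G y lm) = fun y => g y + ∑ j ∈ S, lm j * R j y :=
      funext fun y => hG y lm
    have hdsum : DifferentiableAt ℝ (fun y => ∑ j ∈ S, lm j * R j y) x :=
      DifferentiableAt.fun_sum hdR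
    have hrw : ∀ j ∈ S, fderiv ℝ (fun y => lm j * R j y) x = lm j • fderiv ℝ (R j) x :=
      fun j _ => fderiv_const_mul (((hRC j).differentiable two_ne_zero).differentiableAt) _
    simp only [pd, hfun]
    rw [fderiv_fun_add hdg hdsum, fderiv_fun_sum hdR, Finset.sum_congr rfl hrw]
    simp [ContinuousLinearMap.sum_apply]
  -- continuity of partial derivatives
  have hcont : ∀ (h : (Fin n → ℝ) → ℝ), ContDiff ℝ 2 h →
      Tendsto (fun k => pd h (w k) i) atTop (𝓝 (pd h wstar i)) := by
    intro h hh
    have hc : Continuous fun x => pd h x i := by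
      simp only [pd]
      exact (hh.continuous_fderiv two_ne_zero).clm_apply continuous_const
    exact (hc.tendsto _).comp hw
  set a := pd (fun x => G x lamstar) wstar i with ha
  have hlamj : ∀ j, Tendsto (fun k => lam k j) atTop (𝓝 (lamstar j)) := tendsto_pi_nhds.1 hlam
  have hpd_tendsto : Tendsto (fun k => pd (fun x => G x (lam k)) (w k) i) atTop (𝓝 a) := by
    have h1 : Tendsto (fun k => pd g (w k) i + ∑ j ∈ S, lam k j * pd (R j) (w k) i)
        atTop (𝓝 (pd g wstar i + ∑ j ∈ S, lamstar j * pd (R j) wstar i)) :=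
      (hcont g hgC).add (tendsto_finset_sum _ fun j _ => (hlamj j).mul (hcont (R j) (hRC j)))
    rw [ha, hpdG lamstar wstar]
    exact h1.congr fun k => (hpdG (lam k) (w k)).symm
  -- the quantity s_k = w_k² + μ_k²
  set s : ℕ → ℝ := fun k => (w k i) ^ 2 + (μ k) ^ 2 with hsdef
  have hspos : ∀ k, 0 < s k := fun k =>
    add_pos_of_nonneg_of_pos (sq_nonneg _) (pow_pos (hμpos k) 2)
  have hwi : Tendsto (fun k => w k i) atTop (𝓝 0) := by
    have h := tendsto_pi_nhds.1 hw i; rwa [hi] at h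
  have hs0 : Tendsto s atTop (𝓝 0) := by
    have h : Tendsto s atTop (𝓝 (0 ^ 2 + 0 ^ 2)) := (hwi.pow 2).add (hμ.pow 2)
    simpa using h
  -- t_k = w_k * s_k^(p/2-1) converges
  set t : ℕ → ℝ := fun k => w k i * (s k) ^ (p / 2 - 1) with htdef
  set T : ℝ := (0 - a) / (lamstar 0 * p) with hTdef
  have htT : Tendsto t atTop (𝓝 T) := by
    have hformula : ∀ k, t k
        = (eps k i - pd (fun x => G x (lam k)) (w k) i) / (lam k 0 * p) := by
      intro k
      have hne : lam k 0 * p ≠ 0 := ne_of_gt (mul_pos (hlampos k) hp)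
      rw [eq_div_iff hne]
      have h := hstat k i
      simp only [htdef, hsdef]
      linear_combination h
    have heps' : Tendsto (fun k => eps k i) atTop (𝓝 0) := tendsto_pi_nhds.1 heps i
    have hden : Tendsto (fun k => lam k 0 * p) atTop (𝓝 (lamstar 0 * p)) :=
      (hlamj 0).mul tendsto_const_nhds
    have h := (heps'.sub hpd_tendsto).div hden (ne_of_gt (mul_pos hlamstar hp))
    exact h.congr fun k => (hformula k).symm
  -- q_k = w_k² / s_k
  set q : ℕ → ℝ := fun k => (w k i) ^ 2 / s k with hqdef
  have hqt : ∀ k, q k = (t k) ^ 2 * (s k) ^ (1 - p) := by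
    intro k
    have hsk := hspos k
    have e1 : ((s k) ^ (p / 2 - 1)) ^ (2 : ℕ) = (s k) ^ (p - 2) := by
      rw [← Real.rpow_natCast ((s k) ^ (p / 2 - 1)) 2, ← Real.rpow_mul hsk.le]
      norm_num
      ring_nf
    have e2 : (s k) ^ (p - 2) * (s k) ^ (1 - p) = (s k)⁻¹ := by
      rw [← Real.rpow_add hsk, show p - 2 + (1 - p) = -1 by ring, Real.rpow_neg_one]
    simp only [hqdef, htdef]
    calc (w k i) ^ 2 / s k = (w k i) ^ 2 * (s k)⁻¹ := div_eq_mul_inv _ _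
      _ = (w k i) ^ 2 * ((s k) ^ (p - 2) * (s k) ^ (1 - p)) := by rw [e2]
      _ = (w k i * (s k) ^ (p / 2 - 1)) ^ 2 * (s k) ^ (1 - p) := by rw [mul_pow, e1]; ring
  -- limit of q with the key inequality
  obtain ⟨L, hqL, hL1⟩ : ∃ L, Tendsto q atTop (𝓝 L) ∧ 0 < 1 + (p - 2) * L := by
    rcases lt_or_eq_of_le hp1 with hplt | hpeq
    · refine ⟨0, ?_, by norm_num⟩
      have hsexp : Tendsto (fun k => (s k) ^ (1 - p)) atTop (𝓝 0) := by
        have hc : ContinuousAt (fun x : ℝ => x ^ (1 - p)) 0 :=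
          Real.continuousAt_rpow_const 0 (1 - p) (Or.inr (by linarith))
        have h := hc.tendsto.comp hs0
        simpa [Function.comp_def, Real.zero_rpow (by linarith : (1 : ℝ) - p ≠ 0)] using h
      have h : Tendsto (fun k => (t k) ^ 2 * (s k) ^ (1 - p)) atTop (𝓝 (T ^ 2 * 0)) :=
        (htT.pow 2).mul hsexp
      rw [mul_zero] at h
      exact h.congr fun k => (hqt k).symm
    · refine ⟨T ^ 2, ?_, ?_⟩
      · have hqt' : ∀ k, q k = (t k) ^ 2 := by
          intro k
          rw [hqt k, hpeq]
          simp
        exact (htT.pow 2).congr fun k => (hqt' k).symm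
      · have hq_le : ∀ k, q k ≤ 1 := by
          intro k
          rw [hqdef]
          exact (div_le_one (hspos k)).2 (le_add_of_nonneg_right (sq_nonneg _))
        have hT2 : Tendsto q atTop (𝓝 (T ^ 2)) := by
          have hqt' : ∀ k, q k = (t k) ^ 2 := by
            intro k; rw [hqt k, hpeq]; simp
          exact (htT.pow 2).congr fun k => (hqt' k).symm
        have hle : T ^ 2 ≤ 1 := le_of_tendsto hT2 (Eventually.of_forall hq_le)
        have hne : T ^ 2 ≠ 1 := by
          intro hTeq
          have hlne := hA3 hpeq i hi
          rw [← ha] at hlne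
          rw [hTdef, hpeq] at hTeq
          have hl0 : lamstar 0 ≠ 0 := ne_of_gt hlamstar
          field_simp at hTeq
          rcases lt_or_gt_of_ne hlne with hlt | hgt
          · nlinarith [abs_nonneg a, sq_abs a]
          · nlinarith [abs_nonneg a, sq_abs a]
        have hlt : T ^ 2 < 1 := lt_of_le_of_ne hle hne
        rw [hpeq]; nlinarith
  -- blow-up of p * s^(p/2-1)
  have hsin : Tendsto s atTop (𝓝[>] 0) :=
    tendsto_nhdsWithin_of_tendsto_nhds_of_eventually_within s hs0
      (Eventually.of_forall fun k => hspos k)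
  have hinv : Tendsto (fun k => (s k)⁻¹) atTop atTop := tendsto_inv_nhdsGT_zero.comp hsin
  have hpow : Tendsto (fun k => (s k) ^ (p / 2 - 1)) atTop atTop := by
    have h1 : Tendsto (fun k => ((s k)⁻¹) ^ (1 - p / 2)) atTop atTop :=
      (tendsto_rpow_atTop (by linarith)).comp hinv
    refine h1.congr fun k => ?_
    rw [Real.inv_rpow (hspos k).le, ← Real.rpow_neg (hspos k).le,
      show -(1 - p / 2) = p / 2 - 1 by ring]
  have hmain : Tendsto (fun k => (p * (s k) ^ (p / 2 - 1)) * (1 + (p - 2) * q k))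
      atTop atTop :=
    Tendsto.atTop_mul_pos hL1 (hpow.const_mul_atTop hp)
      (tendsto_const_nhds.add (tendsto_const_nhds.mul hqL))
  -- pointwise identity
  have hident : ∀ k, p * (s k) ^ (p / 2 - 1)
      + p * (p - 2) * (w k i) ^ 2 * (s k) ^ (p / 2 - 2)
      = (p * (s k) ^ (p / 2 - 1)) * (1 + (p - 2) * q k) := by
    intro k
    have hsk := hspos k
    have e3 : (s k) ^ (p / 2 - 2) = (s k) ^ (p / 2 - 1) * (s k)⁻¹ := by
      rw [show p / 2 - 2 = (p / 2 - 1) + (-1) by ring, Real.rpow_add hsk, Real.rpow_neg_one]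
    rw [e3]
    simp only [hqdef]
    field_simp
  have hfinal : Tendsto (fun k => p * (s k) ^ (p / 2 - 1)
      + p * (p - 2) * (w k i) ^ 2 * (s k) ^ (p / 2 - 2)) atTop atTop :=
    hmain.congr fun k => (hident k).symm
  exact tendsto_atTop_mono (fun k => le_abs_self _) hfinal
end

section
/- Let 0 < p ≤ 1, let γ > 0, and let {w_k} ⊆ ℝ and {μ_k} ⊆ (0, ∞) be sequences with w_k → 0, μ_k → 0, and μ_k² ≥ γ |w_k|^{2/(2−p)} for all sufficiently large k. Then μ_k² + (p−1) w_k² ≥ 0 for all sufficiently large k, (p−1) w_k² / μ_k² → 0 (and in the case p = 1 the quantity |w_k² / μ_k²| is eventually bounded by 1/γ), and consequently p (w_k² + μ_k²)^{p/2 − 2} (μ_k² + (p−1) w_k²) → ∞. -/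
open Filter Topology

/-- quantitative core of the blow-up of the smoothed Hessian. If
`wₖ → 0`, `μₖ → 0`, `μₖ > 0` and eventually `μₖ² ≥ γ |wₖ|^{2/(2−p)}` with `γ > 0`,
then eventually `μₖ² + (p−1) wₖ² ≥ 0`, `(p−1) wₖ²/μₖ² → 0` (with
`|wₖ²/μₖ²| ≤ 1/γ` eventually if `p = 1`), and
`p (wₖ² + μₖ²)^{p/2−2} (μₖ² + (p−1) wₖ²) → ∞`. -/
theorem hessian_blowup_core (p γ : ℝ) (hp : 0 < p) (hp1 : p ≤ 1) (hγ : 0 < γ)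
    (w μ : ℕ → ℝ) (hμpos : ∀ k, 0 < μ k)
    (hw : Tendsto w atTop (nhds 0)) (hμ : Tendsto μ atTop (nhds 0))
    (hbound : ∀ᶠ k in atTop, γ * |w k| ^ (2 / (2 - p)) ≤ (μ k) ^ 2) :
    (∀ᶠ k in atTop, 0 ≤ (μ k) ^ 2 + (p - 1) * (w k) ^ 2) ∧
    Tendsto (fun k => (p - 1) * (w k) ^ 2 / (μ k) ^ 2) atTop (nhds 0) ∧
    (p = 1 → ∀ᶠ k in atTop, |(w k) ^ 2 / (μ k) ^ 2| ≤ 1 / γ) ∧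
    Tendsto
      (fun k => p * ((w k) ^ 2 + (μ k) ^ 2) ^ (p / 2 - 2) * ((μ k) ^ 2 + (p - 1) * (w k) ^ 2))
      atTop atTop := by
  have h2p : (0:ℝ) < 2 - p := by linarith
  have hμsq : ∀ k, (0:ℝ) < (μ k) ^ 2 := fun k => pow_pos (hμpos k) 2
  set C : ℝ := max 1 (1/γ) with hC
  have hC1 : (1:ℝ) ≤ C := le_max_left _ _
  have hCγ : 1/γ ≤ C := le_max_right _ _
  -- eventual bound on the ratio by 1/γ in the p = 1 case
  have hcase1 : p = 1 → ∀ᶠ k in atTop, |(w k) ^ 2 / (μ k) ^ 2| ≤ 1 / γ := by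
    intro hpe
    filter_upwards [hbound] with k hk
    rw [hpe] at hk
    norm_num at hk
    rw [abs_of_nonneg (by positivity)]
    rw [div_le_div_iff₀ (hμsq k) hγ]
    linarith [hk]
  -- ratio tendsto and eventual C-bound
  obtain ⟨hten, hCb⟩ : Tendsto (fun k => (p - 1) * (w k) ^ 2 / (μ k) ^ 2) atTop (nhds 0)
      ∧ ∀ᶠ k in atTop, (w k)^2 / (μ k)^2 ≤ C := by
    rcases eq_or_lt_of_le hp1 with hpe | hpl
    · constructor
      · simpa [← hpe] using tendsto_const_nhds (α := ℕ) (f := atTop) (a := (0:ℝ))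
      · filter_upwards [hcase1 hpe] with k hk
        calc (w k)^2 / (μ k)^2 ≤ |(w k)^2/(μ k)^2| := le_abs_self _
        _ ≤ 1/γ := hk
        _ ≤ C := hCγ
    · -- p < 1 : squeeze the ratio by (1/γ) |w|^e with e > 0
      set e : ℝ := (2:ℝ) - 2 / (2 - p) with he
      have hepos : 0 < e := by
        rw [he, sub_pos, div_lt_iff₀ h2p]
        nlinarith
      have hB : ∀ᶠ k in atTop, (w k)^2 / (μ k)^2 ≤ (1/γ) * |w k| ^ e := by
        filter_upwards [hbound] with k hk
        rcases eq_or_ne (w k) 0 with hw0 | hw0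
        · rw [hw0]
          simp [Real.zero_rpow hepos.ne']
        · have habs : 0 < |w k| := abs_pos.mpr hw0
          have hd : 0 < γ * |w k| ^ (2 / (2 - p)) := by positivity
          calc (w k)^2 / (μ k)^2 ≤ (w k)^2 / (γ * |w k| ^ (2 / (2 - p))) :=
                div_le_div_of_nonneg_left (by positivity) hd hk
          _ = (1/γ) * |w k| ^ e := by
              rw [he, show (w k)^2 = |w k| ^ ((2:ℕ):ℝ) by rw [Real.rpow_natCast, sq_abs],
                div_mul_eq_div_div_swap, ← Real.rpow_sub habs, one_div, div_eq_inv_mul]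
              norm_num
      have hwe : Tendsto (fun k => (1/γ) * |w k| ^ e) atTop (nhds 0) := by
        have hc : ContinuousAt (fun x : ℝ => x ^ e) 0 :=
          Real.continuousAt_rpow_const 0 e (Or.inr hepos.le)
        have h0 : Tendsto (fun k => |w k| ^ e) atTop (nhds ((0:ℝ) ^ e)) :=
          hc.tendsto.comp (by simpa using hw.abs)
        rw [Real.zero_rpow hepos.ne'] at h0
        simpa using h0.const_mul (1/γ)
      have hsq : Tendsto (fun k => (w k)^2 / (μ k)^2) atTop (nhds 0) :=
        squeeze_zero' (Eventually.of_forall fun k => by positivity) hB hwe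
      constructor
      · have := hsq.const_mul (p - 1)
        simp only [mul_zero] at this
        refine this.congr fun k => ?_
        ring
      · filter_upwards [hsq.eventually (eventually_le_nhds (show (0:ℝ) < 1 by norm_num))]
          with k hk
        exact hk.trans hC1
  -- smallness of the perturbation
  have hsmall : ∀ᶠ k in atTop, -(1/2 : ℝ) < (p - 1) * (w k) ^ 2 / (μ k) ^ 2 :=
    hten.eventually (eventually_gt_nhds (by norm_num))
  have hpart1 : ∀ᶠ k in atTop, (μ k)^2 / 2 ≤ (μ k) ^ 2 + (p - 1) * (w k) ^ 2 := by
    filter_upwards [hsmall] with k hk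
    have h2 : -(1/2) * (μ k)^2 < (p - 1) * (w k) ^ 2 := by
      rw [lt_div_iff₀ (hμsq k)] at hk
      linarith
    linarith
  refine ⟨?_, hten, hcase1, ?_⟩
  · filter_upwards [hpart1] with k hk
    nlinarith [hμsq k]
  · -- main blow-up
    set c : ℝ := p / 2 * (C + 1) ^ (p/2 - 2) with hc
    have hcpos : 0 < c := by
      have : (0:ℝ) < (C + 1) ^ (p/2 - 2) := Real.rpow_pos_of_pos (by linarith) _
      positivity
    have hginf : Tendsto (fun k => ((μ k)^2) ^ (p/2 - 1)) atTop atTop := by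
      have hinv : Tendsto (fun k => ((μ k)^2)⁻¹) atTop atTop := by
        apply Filter.Tendsto.inv_tendsto_nhdsGT_zero
        rw [tendsto_nhdsWithin_iff]
        constructor
        · have : Tendsto (fun k => (μ k)^2) atTop (nhds (0^2)) := hμ.pow 2
          simpa using this
        · exact Eventually.of_forall fun k => hμsq k
      have := (tendsto_rpow_atTop (show (0:ℝ) < 1 - p/2 by linarith)).comp hinv
      refine this.congr fun k => ?_
      simp only [Function.comp]
      rw [show p/2 - 1 = -(1 - p/2) by ring, Real.rpow_neg (hμsq k).le,
        ← Real.inv_rpow (hμsq k).le]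
    have hfinal : ∀ᶠ k in atTop,
        c * ((μ k)^2) ^ (p/2 - 1) ≤
        p * ((w k) ^ 2 + (μ k) ^ 2) ^ (p / 2 - 2) * ((μ k) ^ 2 + (p - 1) * (w k) ^ 2) := by
      filter_upwards [hCb, hpart1] with k hk1 hk2
      have hwb : (w k)^2 ≤ C * (μ k)^2 := by
        rw [div_le_iff₀ (hμsq k)] at hk1
        linarith
      have hsum : (w k)^2 + (μ k)^2 ≤ (C + 1) * (μ k)^2 := by nlinarith
      have hrp : ((C + 1) * (μ k)^2) ^ (p/2 - 2) ≤ ((w k)^2 + (μ k)^2) ^ (p/2 - 2) :=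
        Real.rpow_le_rpow_of_nonpos (by nlinarith [hμsq k, sq_nonneg (w k)]) hsum (by linarith)
      have hrpos : 0 < ((w k)^2 + (μ k)^2) ^ (p/2 - 2) :=
        Real.rpow_pos_of_pos (by nlinarith [hμsq k, sq_nonneg (w k)]) _
      have heq : ((C + 1) * (μ k)^2) ^ (p/2 - 2) =
          (C + 1) ^ (p/2 - 2) * ((μ k)^2) ^ (p/2 - 2) :=
        Real.mul_rpow (by linarith) (hμsq k).le
      have heq2 : ((μ k)^2) ^ (p/2 - 2) * ((μ k)^2) = ((μ k)^2) ^ (p/2 - 1) := by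
        nth_rewrite 2 [← Real.rpow_one ((μ k)^2)]
        rw [← Real.rpow_add (hμsq k)]
        ring_nf
      calc c * ((μ k)^2) ^ (p/2 - 1)
          = p * ((C + 1) ^ (p/2 - 2) * ((μ k)^2) ^ (p/2 - 2)) * ((μ k)^2 / 2) := by
            rw [hc, ← heq2]; ring
        _ ≤ p * ((w k) ^ 2 + (μ k) ^ 2) ^ (p / 2 - 2) * ((μ k) ^ 2 + (p - 1) * (w k) ^ 2) := by
            rw [← heq]
            have h1 : 0 < ((C + 1) * (μ k)^2) ^ (p/2 - 2) := Real.rpow_pos_of_pos (mul_pos (by linarith) (hμsq k)) _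
            have h2 : 0 < (μ k)^2 / 2 := half_pos (hμsq k)
            apply mul_le_mul
            · exact mul_le_mul_of_nonneg_left hrp hp.le
            · exact hk2
            · exact h2.le
            · positivity
    exact tendsto_atTop_mono' atTop hfinal (hginf.const_mul_atTop hcpos)
end

section
/- Let 0 < p ≤ 1. Let {(w^k, λ^k, ζ^k, β^k)} ⊆ ℝⁿ × ℝ^r × ℝⁿ × ℝ^r be a sequence produced by the smoothing method: there are sequences μ_k > 0 with μ_k → 0 and ε̂_k ≥ 0 with ε̂_k → 0 such that for every k, (w^k, λ^k, ζ^k, β^k) is an ε̂_{k−1}-approximate KKT point of the smoothed one-level problem with smoothing parameter μ_{k−1}. Suppose Assumptions A1–A4 hold. Then every accumulation point (w*, λ*, ζ*, β*) of {(w^k, λ^k, ζ^k, β^k)} satisfies the SB-KKT conditions. -/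
open Filter Topology Finset

/-- `(∇φ_μ)ᵢ` at a scalar coordinate `x`: `p x (x² + μ²)^{p/2−1}`. -/
noncomputable def dphi (p μ x : ℝ) : ℝ := p * x * (x ^ 2 + μ ^ 2) ^ (p / 2 - 1)

/-- `(∇²φ_μ)ᵢᵢ` at a scalar coordinate `x`:
`p (x² + μ²)^{p/2−1} + p(p−2) x² (x² + μ²)^{p/2−2}`. -/
noncomputable def d2phi (p μ x : ℝ) : ℝ :=
  p * (x ^ 2 + μ ^ 2) ^ (p / 2 - 1) + p * (p - 2) * x ^ 2 * (x ^ 2 + μ ^ 2) ^ (p / 2 - 2)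

/-- `(w, λ, ζ, β)` is an `ε̂`-approximate KKT point of the smoothed one-level
problem with smoothing parameter `μ`. -/
def ApproxKKT {n r : ℕ} [NeZero r] (p : ℝ)
    (f : (Fin n → ℝ) → ℝ) (R : Fin r → (Fin n → ℝ) → ℝ)
    (G : (Fin n → ℝ) → (Fin r → ℝ) → ℝ)
    (w : Fin n → ℝ) (lam : Fin r → ℝ) (zeta : Fin n → ℝ) (beta : Fin r → ℝ)
    (μ εhat : ℝ) : Prop :=
  ∃ (e1 : Fin n → ℝ) (e2 : ℝ) (e3 : Fin r → ℝ) (e4 : Fin n → ℝ) (e5 : ℝ),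
    (∀ i, pd f w i
        + ((∑ j, pd2 (fun x => G x lam) w i j * zeta j)
          + lam 0 * d2phi p μ (w i) * zeta i) = e1 i) ∧
    ((∑ i, dphi p μ (w i) * zeta i) - beta 0 = e2) ∧
    (∀ i : Fin r, i ≠ 0 → (∑ j, pd (R i) w j * zeta j) - beta i = e3 i) ∧
    (∀ i, pd (fun x => G x lam) w i + lam 0 * dphi p μ (w i) = e4 i) ∧
    (∀ i, 0 ≤ lam i) ∧ (∀ i, 0 ≤ beta i) ∧ ((∑ i, lam i * beta i) = e5) ∧
    Real.sqrt ((∑ i, (e1 i) ^ 2) + e2 ^ 2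
        + (∑ i ∈ univ.filter (fun i : Fin r => i ≠ 0), (e3 i) ^ 2)
        + (∑ i, (e4 i) ^ 2) + e5 ^ 2) ≤ εhat

/-- The constraint function `Φᵢ(w, λ) = ∂G/∂wᵢ(w, λ̄) + p sgn(wᵢ) λ₁ |wᵢ|^{p−1}`
seen as a function on `ℝⁿ × ℝʳ`. -/
noncomputable def PhiC {n r : ℕ} [NeZero r] (p : ℝ)
    (G : (Fin n → ℝ) → (Fin r → ℝ) → ℝ) (i : Fin n)
    (x : (Fin n → ℝ) × (Fin r → ℝ)) : ℝ :=
  pd (fun w => G w x.2) x.1 i + p * Real.sign (x.1 i) * x.2 0 * |x.1 i| ^ (p - 1)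

/-- The gradient of `Φᵢ` with respect to `(w, λ)`, written blockwise. -/
noncomputable def gradPhiC {n r : ℕ} [NeZero r] (p : ℝ)
    (G : (Fin n → ℝ) → (Fin r → ℝ) → ℝ) (i : Fin n)
    (x : (Fin n → ℝ) × (Fin r → ℝ)) : (Fin n → ℝ) × (Fin r → ℝ) :=
  (fun j => fderiv ℝ (PhiC p G i) x (Pi.single j 1, 0),
   fun j => fderiv ℝ (PhiC p G i) x (0, Pi.single j 1))

/-- The LICQ (Assumption A4) at `(w*, λ*)`: the gradients `∇Φᵢ(w*, λ*)` for
`i ∉ I(w*)`, together with the coordinate vectors `eᵢ^{(w)}` for `i ∈ I(w*)` and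
`eᵢ^{(λ)}` for `i ∈ I(λ*)`, are linearly independent in `ℝⁿ × ℝʳ`. -/
def LICQ {n r : ℕ} [NeZero r] (p : ℝ)
    (G : (Fin n → ℝ) → (Fin r → ℝ) → ℝ)
    (wstar : Fin n → ℝ) (lamstar : Fin r → ℝ) : Prop :=
  LinearIndependent ℝ
    (Sum.elim (fun i : {i : Fin n // wstar i ≠ 0} => gradPhiC p G i.1 (wstar, lamstar))
      (Sum.elim
        (fun i : {i : Fin n // wstar i = 0} =>
          ((Pi.single i.1 1, 0) : (Fin n → ℝ) × (Fin r → ℝ)))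
        (fun j : {j : Fin r // lamstar j = 0} =>
          ((0, Pi.single j.1 1) : (Fin n → ℝ) × (Fin r → ℝ)))))

section deriv
variable {n : ℕ}

lemma contDiff_pd {h : (Fin n → ℝ) → ℝ} (hh : ContDiff ℝ 2 h) (j : Fin n) :
    ContDiff ℝ 1 (fun x => pd h x j) := by
  have h1 : ContDiff ℝ 1 (fderiv ℝ h) := hh.fderiv_right (by norm_num)
  exact h1.clm_apply contDiff_const

lemma continuous_pd {h : (Fin n → ℝ) → ℝ} (hh : ContDiff ℝ 1 h) (j : Fin n) :
    Continuous (fun x => pd h x j) := by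
  have h1 : Continuous (fderiv ℝ h) := hh.continuous_fderiv (by norm_num)
  exact (ContinuousLinearMap.apply ℝ ℝ (Pi.single j 1)).continuous.comp h1

lemma continuous_pd2 {h : (Fin n → ℝ) → ℝ} (hh : ContDiff ℝ 2 h) (i j : Fin n) :
    Continuous (fun x => pd2 h x i j) :=
  continuous_pd (contDiff_pd hh j) i

lemma pd_comb {r : ℕ} {S : Finset (Fin r)} (g' : (Fin n → ℝ) → ℝ) (R' : Fin r → (Fin n → ℝ) → ℝ)
    (c : Fin r → ℝ) (hg' : Differentiable ℝ g') (hR' : ∀ t, Differentiable ℝ (R' t))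
    (w : Fin n → ℝ) (i : Fin n) :
    pd (fun x => g' x + ∑ t ∈ S, c t * R' t x) w i
      = pd g' w i + ∑ t ∈ S, c t * pd (R' t) w i := by
  have H : HasFDerivAt (fun x => g' x + ∑ t ∈ S, c t * R' t x)
      (fderiv ℝ g' w + ∑ t ∈ S, c t • fderiv ℝ (R' t) w) w := by
    exact ((hg' w).hasFDerivAt).add
      (HasFDerivAt.fun_sum fun t _ => ((hR' t w).hasFDerivAt).const_mul (c t))
  simp only [pd, H.fderiv, ContinuousLinearMap.add_apply, ContinuousLinearMap.coe_sum',
    Finset.sum_apply, ContinuousLinearMap.coe_smul', Pi.smul_apply, smul_eq_mul]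

end deriv

section Gsect
variable {n r : ℕ} [NeZero r] {g : (Fin n → ℝ) → ℝ} {R : Fin r → (Fin n → ℝ) → ℝ}
  {G : (Fin n → ℝ) → (Fin r → ℝ) → ℝ}

lemma pd_G (hgC : ContDiff ℝ 2 g) (hRC : ∀ i, ContDiff ℝ 2 (R i))
    (hG : ∀ w lam, G w lam = g w + ∑ i ∈ univ.filter (fun i : Fin r => i ≠ 0), lam i * R i w)
    (lam : Fin r → ℝ) (w : Fin n → ℝ) (i : Fin n) :
    pd (fun x => G x lam) w i
      = pd g w i + ∑ t ∈ univ.filter (fun t : Fin r => t ≠ 0), lam t * pd (R t) w i := by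
  have h0 : (fun x => G x lam)
      = fun x => g x + ∑ t ∈ univ.filter (fun t : Fin r => t ≠ 0), lam t * R t x :=
    funext fun x => hG x lam
  rw [h0, pd_comb _ _ _ (hgC.differentiable (by norm_num))
    (fun t => (hRC t).differentiable (by norm_num))]

lemma pd2_G (hgC : ContDiff ℝ 2 g) (hRC : ∀ i, ContDiff ℝ 2 (R i))
    (hG : ∀ w lam, G w lam = g w + ∑ i ∈ univ.filter (fun i : Fin r => i ≠ 0), lam i * R i w)
    (lam : Fin r → ℝ) (w : Fin n → ℝ) (i j : Fin n) :
    pd2 (fun x => G x lam) w i j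
      = pd2 g w i j + ∑ t ∈ univ.filter (fun t : Fin r => t ≠ 0), lam t * pd2 (R t) w i j := by
  have h1 : (fun x => pd (fun y => G y lam) x j)
      = fun x => (fun y => pd g y j) x
          + ∑ t ∈ univ.filter (fun t : Fin r => t ≠ 0), lam t * (fun y => pd (R t) y j) x :=
    funext fun x => pd_G hgC hRC hG lam x j
  show pd (fun x => pd (fun y => G y lam) x j) w i = _
  rw [h1, pd_comb _ _ _ ((contDiff_pd hgC j).differentiable (by norm_num))
    (fun t => (contDiff_pd (hRC t) j).differentiable (by norm_num))]
  rfl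

lemma tendsto_pdG (hgC : ContDiff ℝ 2 g) (hRC : ∀ i, ContDiff ℝ 2 (R i))
    (hG : ∀ w lam, G w lam = g w + ∑ i ∈ univ.filter (fun i : Fin r => i ≠ 0), lam i * R i w)
    {W : ℕ → Fin n → ℝ} {Λ : ℕ → Fin r → ℝ} {wstar : Fin n → ℝ} {lamstar : Fin r → ℝ}
    (hW : Tendsto W atTop (𝓝 wstar)) (hΛ : Tendsto Λ atTop (𝓝 lamstar)) (i : Fin n) :
    Tendsto (fun k => pd (fun x => G x (Λ k)) (W k) i) atTop
      (𝓝 (pd (fun x => G x lamstar) wstar i)) := by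
  simp only [pd_G hgC hRC hG]
  exact (((continuous_pd (hgC.of_le (by norm_num)) i).tendsto _).comp hW).add
    (tendsto_finset_sum _ fun t _ => (tendsto_pi_nhds.1 hΛ t).mul
      (((continuous_pd ((hRC t).of_le (by norm_num)) i).tendsto _).comp hW))

lemma tendsto_pd2G (hgC : ContDiff ℝ 2 g) (hRC : ∀ i, ContDiff ℝ 2 (R i))
    (hG : ∀ w lam, G w lam = g w + ∑ i ∈ univ.filter (fun i : Fin r => i ≠ 0), lam i * R i w)
    {W : ℕ → Fin n → ℝ} {Λ : ℕ → Fin r → ℝ} {wstar : Fin n → ℝ} {lamstar : Fin r → ℝ}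
    (hW : Tendsto W atTop (𝓝 wstar)) (hΛ : Tendsto Λ atTop (𝓝 lamstar)) (i j : Fin n) :
    Tendsto (fun k => pd2 (fun x => G x (Λ k)) (W k) i j) atTop
      (𝓝 (pd2 (fun x => G x lamstar) wstar i j)) := by
  simp only [pd2_G hgC hRC hG]
  exact (((continuous_pd2 hgC i j).tendsto _).comp hW).add
    (tendsto_finset_sum _ fun t _ => (tendsto_pi_nhds.1 hΛ t).mul
      (((continuous_pd2 (hRC t) i j).tendsto _).comp hW))

end Gsect

section scalar
variable {p : ℝ}

lemma mysign {a : ℝ} (ha : a ≠ 0) : Real.sign a * a = |a| := by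
  rcases ha.lt_or_gt with h | h
  · rw [Real.sign_of_neg h, abs_of_neg h]; ring
  · rw [Real.sign_of_pos h, abs_of_pos h]; ring

lemma s_pos {x μ : ℝ} (hμ : μ ≠ 0) : 0 < x ^ 2 + μ ^ 2 := by positivity

lemma tendsto_s {x μs : ℕ → ℝ} {a : ℝ} (hx : Tendsto x atTop (𝓝 a))
    (hμ : Tendsto μs atTop (𝓝 0)) :
    Tendsto (fun k => x k ^ 2 + μs k ^ 2) atTop (𝓝 (a ^ 2)) := by
  have h := (hx.pow 2).add (hμ.pow 2)
  simpa using h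

lemma tendsto_rpow_s_ne {x μs : ℕ → ℝ} {a e : ℝ} (ha : a ≠ 0) (hx : Tendsto x atTop (𝓝 a))
    (hμ : Tendsto μs atTop (𝓝 0)) :
    Tendsto (fun k => (x k ^ 2 + μs k ^ 2) ^ e) atTop (𝓝 ((a ^ 2) ^ e)) :=
  ((Real.continuousAt_rpow_const _ e (Or.inl (by positivity))).tendsto).comp (tendsto_s hx hμ)

lemma tendsto_rpow_s_zero {x μs : ℕ → ℝ} (hx : Tendsto x atTop (𝓝 0))
    (hμ : Tendsto μs atTop (𝓝 0)) {e : ℝ} (he : 0 < e) :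
    Tendsto (fun k => (x k ^ 2 + μs k ^ 2) ^ e) atTop (𝓝 0) := by
  have h := ((Real.continuousAt_rpow_const 0 e (Or.inr he.le)).tendsto).comp
    (by simpa using tendsto_s hx hμ)
  simpa [Real.zero_rpow he.ne', Function.comp_def] using h

lemma tendsto_x2s_zero (hp : 0 < p) {x μs : ℕ → ℝ} (hμne : ∀ k, μs k ≠ 0)
    (hx : Tendsto x atTop (𝓝 0)) (hμ : Tendsto μs atTop (𝓝 0)) :
    Tendsto (fun k => x k ^ 2 * (x k ^ 2 + μs k ^ 2) ^ (p / 2 - 1)) atTop (𝓝 0) := by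
  refine squeeze_zero (fun k => by positivity) (fun k => ?_)
    (tendsto_rpow_s_zero hx hμ (half_pos hp))
  have hs := s_pos (x := x k) (hμne k)
  calc x k ^ 2 * (x k ^ 2 + μs k ^ 2) ^ (p / 2 - 1)
      ≤ (x k ^ 2 + μs k ^ 2) * (x k ^ 2 + μs k ^ 2) ^ (p / 2 - 1) :=
        mul_le_mul_of_nonneg_right (le_add_of_nonneg_right (by positivity))
          (Real.rpow_nonneg hs.le _)
    _ = (x k ^ 2 + μs k ^ 2) ^ ((1:ℝ)) * (x k ^ 2 + μs k ^ 2) ^ (p / 2 - 1) := by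
        rw [Real.rpow_one]
    _ = (x k ^ 2 + μs k ^ 2) ^ (1 + (p / 2 - 1)) := (Real.rpow_add hs _ _).symm
    _ = (x k ^ 2 + μs k ^ 2) ^ (p / 2) := by norm_num

lemma tendsto_rpow_s_atTop {x μs : ℕ → ℝ} (hμne : ∀ k, μs k ≠ 0)
    (hx : Tendsto x atTop (𝓝 0)) (hμ : Tendsto μs atTop (𝓝 0)) {e : ℝ} (he : e < 0) :
    Tendsto (fun k => (x k ^ 2 + μs k ^ 2) ^ e) atTop atTop := by
  have h0 : Tendsto (fun k => (x k ^ 2 + μs k ^ 2) ^ (-e)) atTop (𝓝[>] 0) :=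
    tendsto_nhdsWithin_of_tendsto_nhds_of_eventually_within _
      (tendsto_rpow_s_zero hx hμ (neg_pos.2 he))
      (Eventually.of_forall fun k => Real.rpow_pos_of_pos (s_pos (hμne k)) _)
  have h1 := h0.inv_tendsto_nhdsGT_zero
  refine h1.congr fun k => ?_
  show ((x k ^ 2 + μs k ^ 2) ^ (-e))⁻¹ = _
  rw [← Real.rpow_neg (s_pos (hμne k)).le, neg_neg]

lemma alg2 {a : ℝ} (ha : a ≠ 0) (p : ℝ) :
    a * (p * (Real.sign a * |a| ^ (p - 1))) = p * |a| ^ p := by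
  have hb : (0 : ℝ) < |a| := abs_pos.2 ha
  have e2 : |a| ^ p = |a| * |a| ^ (p - 1) := by
    rw [show p = 1 + (p - 1) by ring, Real.rpow_add hb, Real.rpow_one]; ring_nf
  calc a * (p * (Real.sign a * |a| ^ (p - 1)))
      = p * ((Real.sign a * a) * |a| ^ (p - 1)) := by ring
    _ = p * (|a| * |a| ^ (p - 1)) := by rw [mysign ha]
    _ = p * |a| ^ p := by rw [← e2]

lemma tendsto_dphi_ne {x μs : ℕ → ℝ} {a : ℝ} (ha : a ≠ 0) (hx : Tendsto x atTop (𝓝 a))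
    (hμ : Tendsto μs atTop (𝓝 0)) :
    Tendsto (fun k => dphi p (μs k) (x k)) atTop (𝓝 (p * (Real.sign a * |a| ^ (p - 1)))) := by
  have hb : (0 : ℝ) < |a| := abs_pos.2 ha
  have h1 : Tendsto (fun k => p * x k * (x k ^ 2 + μs k ^ 2) ^ (p / 2 - 1)) atTop
      (𝓝 (p * a * (a ^ 2) ^ (p / 2 - 1))) :=
    (tendsto_const_nhds.mul hx).mul (tendsto_rpow_s_ne ha hx hμ)
  have h2 : a ^ 2 = |a| ^ (2 : ℝ) := by
    rw [show (2 : ℝ) = ((2 : ℕ) : ℝ) by norm_num, Real.rpow_natCast, sq_abs]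
  have e1 : (a ^ 2) ^ (p / 2 - 1) = |a| ^ (p - 2) := by
    rw [h2, ← Real.rpow_mul (abs_nonneg a), show (2 : ℝ) * (p / 2 - 1) = p - 2 by ring]
  have e2 : |a| ^ (p - 1) = |a| * |a| ^ (p - 2) := by
    rw [show p - 1 = 1 + (p - 2) by ring, Real.rpow_add hb, Real.rpow_one]
  have hsa : Real.sign a * |a| = a := by
    rcases ha.lt_or_gt with h | h
    · rw [Real.sign_of_neg h, abs_of_neg h]; ring
    · rw [Real.sign_of_pos h, abs_of_pos h]; ring
  have e3 : p * a * (a ^ 2) ^ (p / 2 - 1) = p * (Real.sign a * |a| ^ (p - 1)) := by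
    rw [e1, e2]
    calc p * a * |a| ^ (p - 2) = p * ((Real.sign a * |a|) * |a| ^ (p - 2)) := by rw [hsa]; ring
      _ = p * (Real.sign a * (|a| * |a| ^ (p - 2))) := by ring
  rw [← e3]
  exact h1

lemma alg3 {a : ℝ} (ha : a ≠ 0) (p : ℝ) :
    a ^ 2 * (p * (a ^ 2) ^ (p / 2 - 1) + p * (p - 2) * a ^ 2 * (a ^ 2) ^ (p / 2 - 2))
      = p * (p - 1) * |a| ^ p := by
  have hb : (0 : ℝ) < |a| := abs_pos.2 ha
  have h2 : a ^ 2 = |a| ^ (2 : ℝ) := by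
    rw [show (2 : ℝ) = ((2 : ℕ) : ℝ) by norm_num, Real.rpow_natCast, sq_abs]
  have e1 : (a ^ 2) ^ (p / 2 - 1) = |a| ^ (p - 2) := by
    rw [h2, ← Real.rpow_mul (abs_nonneg a), show (2 : ℝ) * (p / 2 - 1) = p - 2 by ring]
  have e2 : (a ^ 2) ^ (p / 2 - 2) = |a| ^ (p - 4) := by
    rw [h2, ← Real.rpow_mul (abs_nonneg a), show (2 : ℝ) * (p / 2 - 2) = p - 4 by ring]
  have k1 : |a| ^ (2 : ℝ) * |a| ^ (p - 2) = |a| ^ p := by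
    rw [← Real.rpow_add hb, show (2 : ℝ) + (p - 2) = p by ring]
  have k2 : |a| ^ (2 : ℝ) * (|a| ^ (2 : ℝ) * |a| ^ (p - 4)) = |a| ^ p := by
    rw [← Real.rpow_add hb, ← Real.rpow_add hb, show (2 : ℝ) + ((2:ℝ) + (p - 4)) = p by ring]
  calc a ^ 2 * (p * (a ^ 2) ^ (p / 2 - 1) + p * (p - 2) * a ^ 2 * (a ^ 2) ^ (p / 2 - 2))
      = p * (a ^ 2 * (a ^ 2) ^ (p / 2 - 1))
        + p * (p - 2) * (a ^ 2 * (a ^ 2 * (a ^ 2) ^ (p / 2 - 2))) := by ring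
    _ = p * |a| ^ p + p * (p - 2) * |a| ^ p := by
        rw [e1, e2]; rw [h2]; rw [k1, k2]
    _ = p * (p - 1) * |a| ^ p := by ring

lemma tendsto_x2d2phi_ne {x μs : ℕ → ℝ} {a : ℝ} (ha : a ≠ 0) (hx : Tendsto x atTop (𝓝 a))
    (hμ : Tendsto μs atTop (𝓝 0)) :
    Tendsto (fun k => x k ^ 2 * d2phi p (μs k) (x k)) atTop (𝓝 (p * (p - 1) * |a| ^ p)) := by
  have h : Tendsto (fun k => x k ^ 2 * (p * (x k ^ 2 + μs k ^ 2) ^ (p / 2 - 1)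
      + p * (p - 2) * x k ^ 2 * (x k ^ 2 + μs k ^ 2) ^ (p / 2 - 2))) atTop
      (𝓝 (a ^ 2 * (p * (a ^ 2) ^ (p / 2 - 1) + p * (p - 2) * a ^ 2 * (a ^ 2) ^ (p / 2 - 2)))) :=
    (hx.pow 2).mul ((tendsto_const_nhds.mul (tendsto_rpow_s_ne ha hx hμ)).add
      ((tendsto_const_nhds.mul (hx.pow 2)).mul (tendsto_rpow_s_ne ha hx hμ)))
  rw [alg3 ha p] at h
  exact h

end scalar


lemma core {p : ℝ} (hp : 0 < p) (hp1 : p ≤ 1)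
    (x μs c ζs D B E1 E4 : ℕ → ℝ) (cstar Dstar Bstar ζstar : ℝ)
    (hμne : ∀ k, μs k ≠ 0)
    (hx : Tendsto x atTop (𝓝 0)) (hμ : Tendsto μs atTop (𝓝 0))
    (hc : Tendsto c atTop (𝓝 cstar)) (hcpos : 0 < cstar)
    (hζ : Tendsto ζs atTop (𝓝 ζstar))
    (hD : Tendsto D atTop (𝓝 Dstar)) (hB : Tendsto B atTop (𝓝 Bstar))
    (hE1 : Tendsto E1 atTop (𝓝 0)) (hE4 : Tendsto E4 atTop (𝓝 0))
    (heq4 : ∀ k, D k + c k * dphi p (μs k) (x k) = E4 k)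
    (heq1 : ∀ k, B k + c k * d2phi p (μs k) (x k) * ζs k = E1 k)
    (hA3 : p = 1 → cstar ≠ |Dstar|) :
    ζstar = 0 ∧ Tendsto (fun k => dphi p (μs k) (x k) * ζs k) atTop (𝓝 0) := by
  have hs : ∀ k, 0 < x k ^ 2 + μs k ^ 2 := fun k => s_pos (hμne k)
  have hcev : ∀ᶠ k in atTop, 0 < c k := hc.eventually (eventually_gt_nhds hcpos)
  -- c * dphi → -Dstar
  have h4 : Tendsto (fun k => c k * dphi p (μs k) (x k)) atTop (𝓝 (-Dstar)) := by
    have h := hE4.sub hD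
    rw [zero_sub] at h
    exact h.congr fun k => by rw [← heq4 k]; ring
  set A : ℝ := -Dstar / p / cstar with hAdef
  have hA : Tendsto (fun k => x k * (x k ^ 2 + μs k ^ 2) ^ (p / 2 - 1)) atTop (𝓝 A) := by
    have h5 : Tendsto (fun k => (c k * dphi p (μs k) (x k)) / p / c k) atTop (𝓝 A) :=
      (h4.div_const p).div hc hcpos.ne'
    refine Tendsto.congr' ?_ h5
    filter_upwards [hcev] with k hk
    simp only [dphi]
    field_simp
  have hsq2 : ∀ k, ((x k ^ 2 + μs k ^ 2) ^ (p / 2 - 1)) ^ 2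
      = (x k ^ 2 + μs k ^ 2) ^ (p - 2) := fun k => by
    rw [← Real.rpow_natCast ((x k ^ 2 + μs k ^ 2) ^ (p / 2 - 1)) 2,
      ← Real.rpow_mul (hs k).le, show (p / 2 - 1) * ((2 : ℕ) : ℝ) = p - 2 by push_cast; ring]
  have hts : ∀ k, x k ^ 2 / (x k ^ 2 + μs k ^ 2)
      = (x k * (x k ^ 2 + μs k ^ 2) ^ (p / 2 - 1)) ^ 2
        * (x k ^ 2 + μs k ^ 2) ^ (1 - p) := fun k => by
    rw [mul_pow, hsq2 k, mul_assoc, ← Real.rpow_add (hs k),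
      show p - 2 + (1 - p) = -1 by ring, Real.rpow_neg_one, div_eq_mul_inv]
  have hT : ∃ T : ℝ, Tendsto (fun k => x k ^ 2 / (x k ^ 2 + μs k ^ 2)) atTop (𝓝 T)
      ∧ (2 - p) * T < 1 := by
    by_cases hpe : p = 1
    · refine ⟨A ^ 2, ?_, ?_⟩
      · have h6 : Tendsto (fun k => (x k * (x k ^ 2 + μs k ^ 2) ^ (p / 2 - 1)) ^ 2) atTop
            (𝓝 (A ^ 2)) := hA.pow 2
        refine Tendsto.congr (fun k => ?_) h6
        rw [hts k, hpe]
        norm_num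
      · have hle : A ^ 2 ≤ 1 := by
          have h7 : ∀ k, (x k * (x k ^ 2 + μs k ^ 2) ^ (p / 2 - 1)) ^ 2 ≤ 1 := fun k => by
            rw [mul_pow, hsq2 k]
            have h8 : x k ^ 2 * (x k ^ 2 + μs k ^ 2) ^ (p - 2)
                ≤ (x k ^ 2 + μs k ^ 2) * (x k ^ 2 + μs k ^ 2) ^ (p - 2) :=
              mul_le_mul_of_nonneg_right (le_add_of_nonneg_right (by positivity))
                (Real.rpow_nonneg (hs k).le _)
            have h9 : (x k ^ 2 + μs k ^ 2) * (x k ^ 2 + μs k ^ 2) ^ (p - 2) = 1 := by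
              nth_rewrite 1 [← Real.rpow_one (x k ^ 2 + μs k ^ 2)]
              rw [← Real.rpow_add (hs k), hpe]
              norm_num
            linarith
          exact le_of_tendsto (hA.pow 2) (Eventually.of_forall h7)
        have hne : A ^ 2 ≠ 1 := by
          intro h
          apply hA3 hpe
          have hA1 : A = -Dstar / cstar := by rw [hAdef, hpe]; ring
          have h10 : Dstar ^ 2 = cstar ^ 2 := by
            rw [hA1] at h
            field_simp at h
            linarith [h]
          have : |Dstar| = |cstar| := by
            rw [← Real.sqrt_sq_eq_abs, ← Real.sqrt_sq_eq_abs, h10]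
          rw [abs_of_pos hcpos] at this
          exact this.symm
        have hlt : A ^ 2 < 1 := lt_of_le_of_ne hle hne
        rw [hpe]; linarith
    · refine ⟨0, ?_, by norm_num⟩
      have h6 : Tendsto (fun k => (x k * (x k ^ 2 + μs k ^ 2) ^ (p / 2 - 1)) ^ 2
          * (x k ^ 2 + μs k ^ 2) ^ (1 - p)) atTop (𝓝 (A ^ 2 * 0)) :=
        (hA.pow 2).mul (tendsto_rpow_s_zero hx hμ (by cases hp1.lt_or_eq with
          | inl h => linarith
          | inr h => exact absurd h hpe))
      rw [mul_zero] at h6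
      exact Tendsto.congr (fun k => (hts k).symm) h6
  obtain ⟨T, hTt, hTlt⟩ := hT
  have hu : Tendsto (fun k => 1 - (2 - p) * (x k ^ 2 / (x k ^ 2 + μs k ^ 2))) atTop
      (𝓝 (1 - (2 - p) * T)) := tendsto_const_nhds.sub (tendsto_const_nhds.mul hTt)
  have hupos : 0 < 1 - (2 - p) * T := by linarith
  have hident : ∀ k, d2phi p (μs k) (x k)
      = p * (x k ^ 2 + μs k ^ 2) ^ (p / 2 - 1)
        * (1 - (2 - p) * (x k ^ 2 / (x k ^ 2 + μs k ^ 2))) := fun k => by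
    have h1 : (x k ^ 2 + μs k ^ 2) ^ (p / 2 - 2)
        = (x k ^ 2 + μs k ^ 2) ^ (p / 2 - 1) / (x k ^ 2 + μs k ^ 2) := by
      rw [show p / 2 - 2 = (p / 2 - 1) - 1 by ring, Real.rpow_sub_one (hs k).ne']
    simp only [d2phi]
    rw [h1]
    field_simp
    ring
  have hd2 : Tendsto (fun k => d2phi p (μs k) (x k)) atTop atTop := by
    have h1 : Tendsto (fun k => (x k ^ 2 + μs k ^ 2) ^ (p / 2 - 1)) atTop atTop :=
      tendsto_rpow_s_atTop hμne hx hμ (by linarith : p / 2 - 1 < 0)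
    have h2 : Tendsto (fun k => p * (1 - (2 - p) * (x k ^ 2 / (x k ^ 2 + μs k ^ 2)))) atTop
        (𝓝 (p * (1 - (2 - p) * T))) := tendsto_const_nhds.mul hu
    have h3 := h1.atTop_mul_pos (mul_pos hp hupos) h2
    exact h3.congr fun k => by rw [hident k]; ring
  have hL : Tendsto (fun k => c k * d2phi p (μs k) (x k) * ζs k) atTop (𝓝 (-Bstar)) := by
    have h := hE1.sub hB
    rw [zero_sub] at h
    exact h.congr fun k => by rw [← heq1 k]; ring
  have hz : ζstar = 0 := by
    by_contra hne
    have hcz : Tendsto (fun k => c k * ζs k) atTop (𝓝 (cstar * ζstar)) := hc.mul hζ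
    rcases lt_or_gt_of_ne hne with hlt | hgt
    · have h1 : Tendsto (fun k => c k * d2phi p (μs k) (x k) * ζs k) atTop atBot := by
        have h2 := hd2.atTop_mul_neg (mul_neg_of_pos_of_neg hcpos hlt) hcz
        exact h2.congr fun k => by ring
      exact not_tendsto_atBot_of_tendsto_nhds hL h1
    · have h1 : Tendsto (fun k => c k * d2phi p (μs k) (x k) * ζs k) atTop atTop := by
        have h2 := hd2.atTop_mul_pos (mul_pos hcpos hgt) hcz
        exact h2.congr fun k => by ring
      exact not_tendsto_atTop_of_tendsto_nhds hL h1
  refine ⟨hz, ?_⟩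
  have hdzl : Tendsto (fun k => d2phi p (μs k) (x k) * ζs k) atTop (𝓝 (-Bstar / cstar)) := by
    have h5 := hL.div hc hcpos.ne'
    refine Tendsto.congr' ?_ h5
    filter_upwards [hcev] with k hk
    simp only [Pi.div_apply]
    rw [mul_assoc, mul_comm (c k), mul_div_assoc, div_self hk.ne', mul_one]
  have hxu : Tendsto (fun k => x k * (d2phi p (μs k) (x k) * ζs k)) atTop (𝓝 0) := by
    simpa using hx.mul hdzl
  have hid2 : ∀ k, dphi p (μs k) (x k) * ζs k
        * (1 - (2 - p) * (x k ^ 2 / (x k ^ 2 + μs k ^ 2)))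
      = x k * (d2phi p (μs k) (x k) * ζs k) := fun k => by
    rw [hident k]
    simp only [dphi]
    ring
  have h6 : Tendsto (fun k => dphi p (μs k) (x k) * ζs k
      * (1 - (2 - p) * (x k ^ 2 / (x k ^ 2 + μs k ^ 2)))) atTop (𝓝 0) :=
    Tendsto.congr (fun k => (hid2 k).symm) hxu
  have h7 := h6.div hu hupos.ne'
  rw [zero_div] at h7
  refine Tendsto.congr' ?_ h7
  filter_upwards [hu.eventually (eventually_gt_nhds (half_lt_self hupos))] with k hk
  have hk0 : (0:ℝ) < 1 - (2 - p) * (x k ^ 2 / (x k ^ 2 + μs k ^ 2)) := by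
    linarith [half_pos hupos]
  simp only [Pi.div_apply]
  rw [mul_div_assoc, div_self hk0.ne', mul_one]


/-- Theorem 2: under Assumptions A1–A4, every accumulation point
`(w*, λ*, ζ*, β*)` of the sequence `{(wᵏ, λᵏ, ζᵏ, βᵏ)}` produced by the smoothing
method satisfies the SB-KKT conditions (i)–(vi). -/
theorem accumulation_point_is_sbkkt {n r : ℕ} [NeZero r] (p : ℝ)
    (hp : 0 < p) (hp1 : p ≤ 1)
    (f g : (Fin n → ℝ) → ℝ) (R : Fin r → (Fin n → ℝ) → ℝ)
    (hfC : ContDiff ℝ 1 f) (hgC : ContDiff ℝ 2 g) (hRC : ∀ i, ContDiff ℝ 2 (R i))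
    (G : (Fin n → ℝ) → (Fin r → ℝ) → ℝ)
    (hG : ∀ w lam, G w lam = g w + ∑ i ∈ univ.filter (fun i : Fin r => i ≠ 0), lam i * R i w)
    (w : ℕ → Fin n → ℝ) (lam : ℕ → Fin r → ℝ)
    (zeta : ℕ → Fin n → ℝ) (beta : ℕ → Fin r → ℝ)
    (μ εhat : ℕ → ℝ)
    (hμpos : ∀ k, 0 < μ k) (hμ : Tendsto μ atTop (nhds 0))
    (hεnonneg : ∀ k, 0 ≤ εhat k) (hε : Tendsto εhat atTop (nhds 0))
    -- (wᵏ⁺¹, λᵏ⁺¹, ζᵏ⁺¹, βᵏ⁺¹) is an ε̂ₖ-approximate KKT point with parameter μₖ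
    (hKKT : ∀ k, ApproxKKT p f R G (w (k + 1)) (lam (k + 1)) (zeta (k + 1)) (beta (k + 1))
      (μ k) (εhat k))
    -- A1
    (hA1 : 0 < Filter.liminf (fun k => lam k 0) atTop)
    -- A2
    (hA2 : ∃ C : ℝ, ∀ k, (∀ i, |w k i| ≤ C) ∧ (∀ i, |lam k i| ≤ C))
    -- A3
    (hA3 : p = 1 → ∀ (wstar : Fin n → ℝ) (lamstar : Fin r → ℝ),
      MapClusterPt (wstar, lamstar) atTop (fun k => (w k, lam k)) →
      ∀ i, wstar i = 0 → lamstar 0 ≠ |pd (fun x => G x lamstar) wstar i|)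
    -- A4
    (hA4 : ∀ (wstar : Fin n → ℝ) (lamstar : Fin r → ℝ),
      MapClusterPt (wstar, lamstar) atTop (fun k => (w k, lam k)) →
      LICQ p G wstar lamstar) :
    ∀ (wstar : Fin n → ℝ) (lamstar : Fin r → ℝ)
      (zetastar : Fin n → ℝ) (betastar : Fin r → ℝ),
      MapClusterPt (wstar, lamstar, zetastar, betastar) atTop
        (fun k => (w k, lam k, zeta k, beta k)) →
      -- (i)  W*² ∇f(w*) + H(w*, λ*) ζ* = 0
      (∀ i, (wstar i) ^ 2 * pd f wstar i
          + ((∑ j, (wstar i) ^ 2 * pd2 (fun x => G x lamstar) wstar i j * zetastar j)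
            + lamstar 0 * p * (p - 1) * |wstar i| ^ p * zetastar i) = 0) ∧
      -- (ii)  W* ∇_w G(w*, λ̄*) + p λ₁* |w*|^p = 0
      (∀ i, wstar i * pd (fun x => G x lamstar) wstar i
          + p * lamstar 0 * |wstar i| ^ p = 0) ∧
      -- (iii)
      ((p * ∑ i ∈ univ.filter (fun i => wstar i ≠ 0),
          Real.sign (wstar i) * |wstar i| ^ (p - 1) * zetastar i) = betastar 0) ∧
      -- (iv)
      (∀ i, wstar i = 0 → zetastar i = 0) ∧
      -- (v)
      (∀ i : Fin r, i ≠ 0 → (∑ j, pd (R i) wstar j * zetastar j) = betastar i) ∧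
      -- (vi)
      ((∀ i, 0 ≤ lamstar i) ∧ (∀ i, 0 ≤ betastar i) ∧ (∑ i, lamstar i * betastar i) = 0) := by
  intro wstar lamstar zetastar betastar hcl
  obtain ⟨φ, hφ, hφt⟩ := TopologicalSpace.FirstCountableTopology.tendsto_subseq hcl
  set ψ : ℕ → ℕ := fun k => φ (k + 1) with hψdef
  have hψk : ∀ k, k + 1 ≤ ψ k := fun k => hφ.le_apply
  have hψk' : ∀ k, k ≤ ψ k := fun k => le_trans (Nat.le_succ k) (hψk k)
  set m : ℕ → ℕ := fun k => ψ k - 1 with hmdef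
  have hmψ : ∀ k, m k + 1 = ψ k := fun k => by
    have := hψk k; simp only [hmdef]; omega
  have hmk : ∀ k, k ≤ m k := fun k => by have := hψk k; simp only [hmdef]; omega
  have hmtop : Tendsto m atTop atTop := tendsto_atTop_mono hmk tendsto_id
  -- tendsto of the subsequence tuple
  have htup : Tendsto (fun k => (w (ψ k), lam (ψ k), zeta (ψ k), beta (ψ k))) atTop
      (𝓝 (wstar, lamstar, zetastar, betastar)) := by
    have h := hφt.comp (tendsto_add_atTop_nat 1)
    exact h
  have hW : Tendsto (fun k => w (ψ k)) atTop (𝓝 wstar) := (continuous_fst.tendsto _).comp htup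
  have hrest := (continuous_snd.tendsto _).comp htup
  have hΛ : Tendsto (fun k => lam (ψ k)) atTop (𝓝 lamstar) := (continuous_fst.tendsto _).comp hrest
  have hrest2 := (continuous_snd.tendsto _).comp hrest
  have hZ : Tendsto (fun k => zeta (ψ k)) atTop (𝓝 zetastar) := (continuous_fst.tendsto _).comp hrest2
  have hβ : Tendsto (fun k => beta (ψ k)) atTop (𝓝 betastar) := (continuous_snd.tendsto _).comp hrest2
  have hWi : ∀ i, Tendsto (fun k => w (ψ k) i) atTop (𝓝 (wstar i)) := fun i => tendsto_pi_nhds.1 hW i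
  have hΛi : ∀ i, Tendsto (fun k => lam (ψ k) i) atTop (𝓝 (lamstar i)) := fun i => tendsto_pi_nhds.1 hΛ i
  have hZi : ∀ i, Tendsto (fun k => zeta (ψ k) i) atTop (𝓝 (zetastar i)) := fun i => tendsto_pi_nhds.1 hZ i
  have hβi : ∀ i, Tendsto (fun k => beta (ψ k) i) atTop (𝓝 (betastar i)) := fun i => tendsto_pi_nhds.1 hβ i
  -- KKT along the subsequence
  have hK : ∀ k, ApproxKKT p f R G (w (ψ k)) (lam (ψ k)) (zeta (ψ k)) (beta (ψ k))
      (μ (m k)) (εhat (m k)) := fun k => by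
    have h := hKKT (m k)
    rwa [hmψ k] at h
  choose e1 e2 e3 e4 e5 hh using hK
  have hq1 : ∀ k i, pd f (w (ψ k)) i
      + ((∑ j, pd2 (fun x => G x (lam (ψ k))) (w (ψ k)) i j * zeta (ψ k) j)
        + lam (ψ k) 0 * d2phi p (μ (m k)) (w (ψ k) i) * zeta (ψ k) i) = e1 k i :=
    fun k => (hh k).1
  have hq2 : ∀ k, (∑ i, dphi p (μ (m k)) (w (ψ k) i) * zeta (ψ k) i) - beta (ψ k) 0 = e2 k :=
    fun k => (hh k).2.1
  have hq3 : ∀ k (i : Fin r), i ≠ 0 →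
      (∑ j, pd (R i) (w (ψ k)) j * zeta (ψ k) j) - beta (ψ k) i = e3 k i := fun k => (hh k).2.2.1
  have hq4 : ∀ k i, pd (fun x => G x (lam (ψ k))) (w (ψ k)) i
      + lam (ψ k) 0 * dphi p (μ (m k)) (w (ψ k) i) = e4 k i := fun k => (hh k).2.2.2.1
  have hqln : ∀ k i, 0 ≤ lam (ψ k) i := fun k => (hh k).2.2.2.2.1
  have hqbn : ∀ k i, 0 ≤ beta (ψ k) i := fun k => (hh k).2.2.2.2.2.1
  have hq5 : ∀ k, (∑ i, lam (ψ k) i * beta (ψ k) i) = e5 k := fun k => (hh k).2.2.2.2.2.2.1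
  have hqn : ∀ k, Real.sqrt ((∑ i, (e1 k i) ^ 2) + e2 k ^ 2
      + (∑ i ∈ univ.filter (fun i : Fin r => i ≠ 0), (e3 k i) ^ 2)
      + (∑ i, (e4 k i) ^ 2) + e5 k ^ 2) ≤ εhat (m k) := fun k => (hh k).2.2.2.2.2.2.2
  have hεm : Tendsto (fun k => εhat (m k)) atTop (𝓝 0) := hε.comp hmtop
  have hμm : Tendsto (fun k => μ (m k)) atTop (𝓝 0) := hμ.comp hmtop
  have hμne : ∀ k, μ (m k) ≠ 0 := fun k => (hμpos (m k)).ne'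
  -- bounds on the error terms
  have hbound : ∀ k (a : ℝ), a ^ 2 ≤ (∑ i, (e1 k i) ^ 2) + e2 k ^ 2
      + (∑ i ∈ univ.filter (fun i : Fin r => i ≠ 0), (e3 k i) ^ 2)
      + (∑ i, (e4 k i) ^ 2) + e5 k ^ 2 → |a| ≤ εhat (m k) := by
    intro k a ha
    calc |a| = Real.sqrt (a ^ 2) := (Real.sqrt_sq_eq_abs a).symm
      _ ≤ Real.sqrt ((∑ i, (e1 k i) ^ 2) + e2 k ^ 2
          + (∑ i ∈ univ.filter (fun i : Fin r => i ≠ 0), (e3 k i) ^ 2)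
          + (∑ i, (e4 k i) ^ 2) + e5 k ^ 2) := Real.sqrt_le_sqrt ha
      _ ≤ εhat (m k) := hqn k
  have hnn1 : ∀ k, (0:ℝ) ≤ ∑ i, (e1 k i) ^ 2 := fun k => Finset.sum_nonneg fun _ _ => sq_nonneg _
  have hnn3 : ∀ k, (0:ℝ) ≤ ∑ i ∈ univ.filter (fun i : Fin r => i ≠ 0), (e3 k i) ^ 2 :=
    fun k => Finset.sum_nonneg fun _ _ => sq_nonneg _
  have hnn4 : ∀ k, (0:ℝ) ≤ ∑ i, (e4 k i) ^ 2 := fun k => Finset.sum_nonneg fun _ _ => sq_nonneg _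
  have he1 : ∀ i, Tendsto (fun k => e1 k i) atTop (𝓝 0) := fun i =>
    squeeze_zero_norm (fun k => by
      rw [Real.norm_eq_abs]
      refine hbound k _ ?_
      have h1 : e1 k i ^ 2 ≤ ∑ j, (e1 k j) ^ 2 :=
        Finset.single_le_sum (f := fun j => e1 k j ^ 2) (fun j _ => sq_nonneg _) (mem_univ i)
      have := hnn3 k; have := hnn4 k
      nlinarith [sq_nonneg (e2 k), sq_nonneg (e5 k)]) hεm
  have he2 : Tendsto (fun k => e2 k) atTop (𝓝 0) :=
    squeeze_zero_norm (fun k => by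
      rw [Real.norm_eq_abs]
      refine hbound k _ ?_
      have := hnn1 k; have := hnn3 k; have := hnn4 k
      nlinarith [sq_nonneg (e5 k)]) hεm
  have he3 : ∀ i : Fin r, i ≠ 0 → Tendsto (fun k => e3 k i) atTop (𝓝 0) := fun i hi =>
    squeeze_zero_norm (fun k => by
      rw [Real.norm_eq_abs]
      refine hbound k _ ?_
      have h1 : e3 k i ^ 2 ≤ ∑ j ∈ univ.filter (fun j : Fin r => j ≠ 0), (e3 k j) ^ 2 :=
        Finset.single_le_sum (f := fun j => e3 k j ^ 2) (fun j _ => sq_nonneg _)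
          (Finset.mem_filter.2 ⟨mem_univ i, hi⟩)
      have := hnn1 k; have := hnn4 k
      nlinarith [sq_nonneg (e2 k), sq_nonneg (e5 k)]) hεm
  have he4 : ∀ i, Tendsto (fun k => e4 k i) atTop (𝓝 0) := fun i =>
    squeeze_zero_norm (fun k => by
      rw [Real.norm_eq_abs]
      refine hbound k _ ?_
      have h1 : e4 k i ^ 2 ≤ ∑ j, (e4 k j) ^ 2 :=
        Finset.single_le_sum (f := fun j => e4 k j ^ 2) (fun j _ => sq_nonneg _) (mem_univ i)
      have := hnn1 k; have := hnn3 k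
      nlinarith [sq_nonneg (e2 k), sq_nonneg (e5 k)]) hεm
  have he5 : Tendsto (fun k => e5 k) atTop (𝓝 0) :=
    squeeze_zero_norm (fun k => by
      rw [Real.norm_eq_abs]
      refine hbound k _ ?_
      have := hnn1 k; have := hnn3 k; have := hnn4 k
      nlinarith [sq_nonneg (e2 k)]) hεm
  -- λ₁* > 0
  have hc : Tendsto (fun k => lam (ψ k) 0) atTop (𝓝 (lamstar 0)) := hΛi 0
  have hcstar : 0 < lamstar 0 := by
    by_contra hle
    push_neg at hle
    obtain ⟨C, hC⟩ := hA2
    have hbd : IsBoundedUnder (· ≥ ·) atTop (fun k => lam k 0) :=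
      isBoundedUnder_of ⟨-C, fun k => by
        have := (abs_le.1 ((hC k).2 0)).1; linarith⟩
    have hL0 : 0 < Filter.liminf (fun k => lam k 0) atTop := hA1
    set L := Filter.liminf (fun k => lam k 0) atTop with hLdef
    have hfreq : ∃ᶠ k in atTop, lam k 0 ≤ lamstar 0 + L / 2 := by
      rw [frequently_atTop]
      intro M
      have hev : ∀ᶠ k in atTop, lam (ψ k) 0 < lamstar 0 + L / 2 :=
        hc.eventually (eventually_lt_nhds (by linarith [hL0]))
      obtain ⟨N, hN⟩ := eventually_atTop.1 hev
      exact ⟨ψ (max N M), le_trans (le_max_right N M) (hψk' _),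
        (hN _ (le_max_left N M)).le⟩
    have hll : L ≤ lamstar 0 + L / 2 := liminf_le_of_frequently_le hfreq hbd
    linarith
  -- derivative limits
  have hft : ∀ i, Tendsto (fun k => pd f (w (ψ k)) i) atTop (𝓝 (pd f wstar i)) :=
    fun i => ((continuous_pd hfC i).tendsto _).comp hW
  have hDt : ∀ i, Tendsto (fun k => pd (fun x => G x (lam (ψ k))) (w (ψ k)) i) atTop
      (𝓝 (pd (fun x => G x lamstar) wstar i)) := fun i => tendsto_pdG hgC hRC hG hW hΛ i
  have hp2t : ∀ i j, Tendsto (fun k => pd2 (fun x => G x (lam (ψ k))) (w (ψ k)) i j) atTop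
      (𝓝 (pd2 (fun x => G x lamstar) wstar i j)) := fun i j => tendsto_pd2G hgC hRC hG hW hΛ i j
  have hBti : ∀ i, Tendsto (fun k => pd f (w (ψ k)) i
      + ∑ j, pd2 (fun x => G x (lam (ψ k))) (w (ψ k)) i j * zeta (ψ k) j) atTop
      (𝓝 (pd f wstar i + ∑ j, pd2 (fun x => G x lamstar) wstar i j * zetastar j)) :=
    fun i => (hft i).add (tendsto_finset_sum _ fun j _ => (hp2t i j).mul (hZi j))
  -- the core analysis at vanishing coordinates
  have hcore : ∀ i, wstar i = 0 → zetastar i = 0 ∧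
      Tendsto (fun k => dphi p (μ (m k)) (w (ψ k) i) * zeta (ψ k) i) atTop (𝓝 0) := by
    intro i hi
    have hxi : Tendsto (fun k => w (ψ k) i) atTop (𝓝 0) := hi ▸ hWi i
    have hA3' : p = 1 → lamstar 0 ≠ |pd (fun x => G x lamstar) wstar i| := by
      intro hpe
      have hmc : MapClusterPt (wstar, lamstar) atTop (fun k => (w k, lam k)) := by
        refine MapClusterPt.of_comp (φ := ψ) (tendsto_atTop_mono hψk' tendsto_id) ?_
        exact (hW.prodMk_nhds hΛ).mapClusterPt
      exact hA3 hpe wstar lamstar hmc i hi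
    exact core hp hp1 (fun k => w (ψ k) i) (fun k => μ (m k)) (fun k => lam (ψ k) 0)
      (fun k => zeta (ψ k) i)
      (fun k => pd (fun x => G x (lam (ψ k))) (w (ψ k)) i)
      (fun k => pd f (w (ψ k)) i
        + ∑ j, pd2 (fun x => G x (lam (ψ k))) (w (ψ k)) i j * zeta (ψ k) j)
      (fun k => e1 k i) (fun k => e4 k i)
      (lamstar 0) (pd (fun x => G x lamstar) wstar i)
      (pd f wstar i + ∑ j, pd2 (fun x => G x lamstar) wstar i j * zetastar j)
      (zetastar i)
      hμne hxi hμm hc hcstar (hZi i) (hDt i) (hBti i) (he1 i) (he4 i)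
      (fun k => hq4 k i)
      (fun k => show pd f (w (ψ k)) i
          + ∑ j, pd2 (fun x => G x (lam (ψ k))) (w (ψ k)) i j * zeta (ψ k) j
          + lam (ψ k) 0 * d2phi p (μ (m k)) (w (ψ k) i) * zeta (ψ k) i = e1 k i from
        by linarith [hq1 k i]) hA3'
  refine ⟨?_, ?_, ?_, fun i hi => (hcore i hi).1, ?_, ?_, ?_, ?_⟩
  · -- (i)
    intro i
    by_cases hi : wstar i = 0
    · simp [hi, Real.zero_rpow hp.ne']
    · have hxi := hWi i
      have t1 : Tendsto (fun k => (w (ψ k) i) ^ 2 * pd f (w (ψ k)) i) atTop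
          (𝓝 ((wstar i) ^ 2 * pd f wstar i)) := ((hWi i).pow 2).mul (hft i)
      have t2 : Tendsto (fun k => (w (ψ k) i) ^ 2
          * ∑ j, pd2 (fun x => G x (lam (ψ k))) (w (ψ k)) i j * zeta (ψ k) j) atTop
          (𝓝 ((wstar i) ^ 2 * ∑ j, pd2 (fun x => G x lamstar) wstar i j * zetastar j)) :=
        ((hWi i).pow 2).mul (tendsto_finset_sum _ fun j _ => (hp2t i j).mul (hZi j))
      have t3 : Tendsto (fun k => (w (ψ k) i) ^ 2
          * (lam (ψ k) 0 * d2phi p (μ (m k)) (w (ψ k) i) * zeta (ψ k) i)) atTop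
          (𝓝 (lamstar 0 * (p * (p - 1) * |wstar i| ^ p) * zetastar i)) := by
        have h := (hc.mul (tendsto_x2d2phi_ne (p := p) hi hxi hμm)).mul (hZi i)
        exact Tendsto.congr (fun k => by ring) h
      have hmul : Tendsto (fun k => (w (ψ k) i) ^ 2 * e1 k i) atTop (𝓝 0) := by
        simpa using ((hWi i).pow 2).mul (he1 i)
      have hEq : ∀ k, (w (ψ k) i) ^ 2 * pd f (w (ψ k)) i
          + ((w (ψ k) i) ^ 2 * ∑ j, pd2 (fun x => G x (lam (ψ k))) (w (ψ k)) i j * zeta (ψ k) j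
            + (w (ψ k) i) ^ 2
              * (lam (ψ k) 0 * d2phi p (μ (m k)) (w (ψ k) i) * zeta (ψ k) i))
          = (w (ψ k) i) ^ 2 * e1 k i := fun k => by rw [← hq1 k i]; ring
      have heq := tendsto_nhds_unique (Tendsto.congr hEq (t1.add (t2.add t3))) hmul
      have hms : ∑ j, (wstar i) ^ 2 * pd2 (fun x => G x lamstar) wstar i j * zetastar j
          = (wstar i) ^ 2 * ∑ j, pd2 (fun x => G x lamstar) wstar i j * zetastar j := by
        rw [Finset.mul_sum]
        exact Finset.sum_congr rfl fun j _ => by ring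
      rw [hms]
      ring_nf at heq ⊢
      linarith [heq]
  · -- (ii)
    intro i
    by_cases hi : wstar i = 0
    · simp [hi, Real.zero_rpow hp.ne']
    · have hxi := hWi i
      have hlhs : Tendsto (fun k => w (ψ k) i * (pd (fun x => G x (lam (ψ k))) (w (ψ k)) i
          + lam (ψ k) 0 * dphi p (μ (m k)) (w (ψ k) i))) atTop
          (𝓝 (wstar i * (pd (fun x => G x lamstar) wstar i
            + lamstar 0 * (p * (Real.sign (wstar i) * |wstar i| ^ (p - 1)))))) :=
        (hWi i).mul ((hDt i).add (hc.mul (tendsto_dphi_ne hi hxi hμm)))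
      have hrhs : Tendsto (fun k => w (ψ k) i * e4 k i) atTop (𝓝 0) := by
        simpa using (hWi i).mul (he4 i)
      have heq := tendsto_nhds_unique (hlhs.congr (fun k => by rw [hq4 k i])) hrhs
      have halg := alg2 hi p
      have h3 : wstar i * pd (fun x => G x lamstar) wstar i
          + lamstar 0 * (p * |wstar i| ^ p) = 0 := by
        have hexp : wstar i * (pd (fun x => G x lamstar) wstar i
            + lamstar 0 * (p * (Real.sign (wstar i) * |wstar i| ^ (p - 1))))
            = wstar i * pd (fun x => G x lamstar) wstar i
              + lamstar 0 * (wstar i * (p * (Real.sign (wstar i) * |wstar i| ^ (p - 1)))) := by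
          ring
        rw [hexp, halg] at heq
        exact heq
      ring_nf at h3 ⊢
      linarith [h3]
  · -- (iii)
    classical
    set l : Fin n → ℝ := fun i => if wstar i = 0 then 0
      else p * (Real.sign (wstar i) * |wstar i| ^ (p - 1) * zetastar i) with hldef
    have hterm : ∀ i, Tendsto (fun k => dphi p (μ (m k)) (w (ψ k) i) * zeta (ψ k) i) atTop
        (𝓝 (l i)) := by
      intro i
      by_cases hi : wstar i = 0
      · simp only [hldef, if_pos hi]
        exact (hcore i hi).2
      · simp only [hldef, if_neg hi]
        have h := (tendsto_dphi_ne (p := p) hi (hWi i) hμm).mul (hZi i)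
        convert h using 1
        ring
    have hsumt : Tendsto (fun k => ∑ i, dphi p (μ (m k)) (w (ψ k) i) * zeta (ψ k) i) atTop
        (𝓝 (∑ i, l i)) := tendsto_finset_sum _ fun i _ => hterm i
    have heq := tendsto_nhds_unique ((hsumt.sub (hβi 0)).congr (fun k => hq2 k)) he2
    have hsplit : ∑ i, l i = p * ∑ i ∈ univ.filter (fun i => wstar i ≠ 0),
        Real.sign (wstar i) * |wstar i| ^ (p - 1) * zetastar i := by
      rw [← Finset.sum_filter_add_sum_filter_not univ (fun i => wstar i ≠ 0) l]
      have hz2 : ∑ i ∈ univ.filter (fun i => ¬wstar i ≠ 0), l i = 0 :=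
        Finset.sum_eq_zero fun i hi => by
          simp only [hldef]
          exact if_pos (not_not.1 (Finset.mem_filter.1 hi).2)
      rw [hz2, add_zero, Finset.mul_sum]
      exact Finset.sum_congr rfl fun i hi => by
        simp only [hldef]
        exact if_neg (Finset.mem_filter.1 hi).2
    rw [← hsplit]
    linarith [heq]
  · -- (v)
    intro i hi
    have hsv : Tendsto (fun k => ∑ j, pd (R i) (w (ψ k)) j * zeta (ψ k) j) atTop
        (𝓝 (∑ j, pd (R i) wstar j * zetastar j)) :=
      tendsto_finset_sum _ fun j _ =>
        (((continuous_pd ((hRC i).of_le (by norm_num)) j).tendsto _).comp hW).mul (hZi j)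
    have heq := tendsto_nhds_unique ((hsv.sub (hβi i)).congr (fun k => hq3 k i hi)) (he3 i hi)
    linarith [heq]
  · exact fun i => ge_of_tendsto' (hΛi i) (fun k => hqln k i)
  · exact fun i => ge_of_tendsto' (hβi i) (fun k => hqbn k i)
  · have hsum : Tendsto (fun k => ∑ i, lam (ψ k) i * beta (ψ k) i) atTop
        (𝓝 (∑ i, lamstar i * betastar i)) :=
      tendsto_finset_sum _ fun i _ => (hΛi i).mul (hβi i)
    exact tendsto_nhds_unique (hsum.congr (fun k => hq5 k)) he5
end
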